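/- arXiv:2207.03974 — 4 statements merged into one kernel-verified Lean document; each statement's English description precedes it below -/
import Mathlib

section
/- For every n ≥ 3, sat*(n, X) = 2n + 2, where X is the 5-element poset with two incomparable minimal elements, a middle element, and two incomparable maximal elements. -/
/-- `φ` is an induced-copy map of the poset `P` into the family `F`
(posets are finite collections of finite subsets of `ℕ`, ordered by inclusion). -/
def IsCopyMap (P F : Finset (Finset ℕ)) (φ : Finset ℕ → Finset ℕ) : Prop :=
  Set.InjOn φ ↑P ∧ (∀ A ∈ P, φ A ∈ F) ∧ ∀ A ∈ P, ∀ B ∈ P, (φ A ⊆ φ B ↔ A ⊆ B)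

/-- `F` contains an induced copy of the poset `P`. -/
def ContainsInduced (P F : Finset (Finset ℕ)) : Prop := ∃ φ, IsCopyMap P F φ

/-- `F ⊆ 2^[n]` is induced `P`-saturated. -/
def InducedSaturated (n : ℕ) (P F : Finset (Finset ℕ)) : Prop :=
  (∀ A ∈ F, A ⊆ Finset.Icc 1 n) ∧ ¬ ContainsInduced P F ∧
  ∀ S ⊆ Finset.Icc 1 n, S ∉ F → ContainsInduced P (insert S F)

/-- `P` has legs `L1, L2` and hip `H`. -/
def LegsAt (P : Finset (Finset ℕ)) (L1 L2 H : Finset ℕ) : Prop :=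
  L1 ∈ P ∧ L2 ∈ P ∧ H ∈ P ∧ L1 ≠ L2 ∧ L1 ≠ H ∧ L2 ≠ H ∧
  ¬ L1 ⊆ L2 ∧ ¬ L2 ⊆ L1 ∧ L1 ⊆ H ∧ L2 ⊆ H ∧
  ∀ A ∈ P, A ≠ L1 → A ≠ L2 → A ≠ H → H ⊆ A

/-- `P` has legs. -/
def HasLegs (P : Finset (Finset ℕ)) : Prop := ∃ L1 L2 H, LegsAt P L1 L2 H

/-- `sat*(n, P)`: the minimum size of an induced `P`-saturated family in `2^[n]`. -/
noncomputable def satStar (n : ℕ) (P : Finset (Finset ℕ)) : ℕ :=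
  sInf {k | ∃ F : Finset (Finset ℕ), InducedSaturated n P F ∧ F.card = k}

/-- The poset `X`: two incomparable minimal elements below a middle element,
which lies below two incomparable maximal elements. -/
def posetX : Finset (Finset ℕ) := {{1}, {2}, {1, 2}, {1, 2, 3}, {1, 2, 4}}

lemma memX (A : Finset ℕ) :
    A ∈ posetX ↔ A = {1} ∨ A = {2} ∨ A = {1,2} ∨ A = {1,2,3} ∨ A = {1,2,4} := by
  simp [posetX]

lemma mkCopy (F' : Finset (Finset ℕ)) (u v w b₁ b₂ : Finset ℕ)
    (hu : u ∈ F') (hv : v ∈ F') (hw : w ∈ F') (hb₁ : b₁ ∈ F') (hb₂ : b₂ ∈ F')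
    (huv : ¬ u ⊆ v) (hvu : ¬ v ⊆ u)
    (huw : u ⊆ w) (hvw : v ⊆ w)
    (hwb₁ : w ⊆ b₁) (hwb₂ : w ⊆ b₂)
    (h12 : ¬ b₁ ⊆ b₂) (h21 : ¬ b₂ ⊆ b₁) :
    ContainsInduced posetX F' := by
  have hwu : ¬ w ⊆ u := fun h => hvu (hvw.trans h)
  have hwv : ¬ w ⊆ v := fun h => huv (huw.trans h)
  have hub₁ : u ⊆ b₁ := huw.trans hwb₁
  have hub₂ : u ⊆ b₂ := huw.trans hwb₂
  have hvb₁ : v ⊆ b₁ := hvw.trans hwb₁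
  have hvb₂ : v ⊆ b₂ := hvw.trans hwb₂
  have hb₁w : ¬ b₁ ⊆ w := fun h => h12 (h.trans hwb₂)
  have hb₂w : ¬ b₂ ⊆ w := fun h => h21 (h.trans hwb₁)
  have hb₁u : ¬ b₁ ⊆ u := fun h => hb₁w (h.trans huw)
  have hb₁v : ¬ b₁ ⊆ v := fun h => hb₁w (h.trans hvw)
  have hb₂u : ¬ b₂ ⊆ u := fun h => hb₂w (h.trans huw)
  have hb₂v : ¬ b₂ ⊆ v := fun h => hb₂w (h.trans hvw)
  have nuv : u ≠ v := fun h => huv (h ▸ Finset.Subset.refl u)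
  have nuw : u ≠ w := fun h => hwu (h ▸ Finset.Subset.refl u)
  have nvw : v ≠ w := fun h => hwv (h ▸ Finset.Subset.refl v)
  have nub₁ : u ≠ b₁ := fun h => hb₁u (h ▸ Finset.Subset.refl u)
  have nub₂ : u ≠ b₂ := fun h => hb₂u (h ▸ Finset.Subset.refl u)
  have nvb₁ : v ≠ b₁ := fun h => hb₁v (h ▸ Finset.Subset.refl v)
  have nvb₂ : v ≠ b₂ := fun h => hb₂v (h ▸ Finset.Subset.refl v)
  have nwb₁ : w ≠ b₁ := fun h => hb₁w (h ▸ Finset.Subset.refl w)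
  have nwb₂ : w ≠ b₂ := fun h => hb₂w (h ▸ Finset.Subset.refl w)
  have nb : b₁ ≠ b₂ := fun h => h12 (h ▸ Finset.Subset.refl b₁)
  have d21 : ¬ ({2} : Finset ℕ) = {1} := by decide
  have d31 : ¬ ({1,2} : Finset ℕ) = {1} := by decide
  have d32 : ¬ ({1,2} : Finset ℕ) = {2} := by decide
  have d41 : ¬ ({1,2,3} : Finset ℕ) = {1} := by decide
  have d42 : ¬ ({1,2,3} : Finset ℕ) = {2} := by decide
  have d43 : ¬ ({1,2,3} : Finset ℕ) = {1,2} := by decide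
  have d51 : ¬ ({1,2,4} : Finset ℕ) = {1} := by decide
  have d52 : ¬ ({1,2,4} : Finset ℕ) = {2} := by decide
  have d53 : ¬ ({1,2,4} : Finset ℕ) = {1,2} := by decide
  have d54 : ¬ ({1,2,4} : Finset ℕ) = {1,2,3} := by decide
  set φ : Finset ℕ → Finset ℕ := fun A => if A = {1} then u else if A = {2} then v
      else if A = {1,2} then w else if A = {1,2,3} then b₁ else b₂ with hφ
  have e1 : φ {1} = u := by simp [hφ]
  have e2 : φ {2} = v := by simp [hφ, d21]
  have e3 : φ {1,2} = w := by simp [hφ, d31, d32]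
  have e4 : φ {1,2,3} = b₁ := by simp [hφ, d41, d42, d43]
  have e5 : φ {1,2,4} = b₂ := by simp [hφ, d51, d52, d53, d54]
  refine ⟨φ, ?_, ?_, ?_⟩
  · intro A hA B hB hEq
    rw [Finset.mem_coe, memX] at hA hB
    rcases hA with rfl|rfl|rfl|rfl|rfl <;> rcases hB with rfl|rfl|rfl|rfl|rfl <;>
      simp only [e1, e2, e3, e4, e5] at hEq <;>
      first | rfl | (exact absurd hEq (by assumption)) |
        (exact absurd hEq.symm (by assumption))
  · intro A hA
    rw [memX] at hA
    rcases hA with rfl|rfl|rfl|rfl|rfl <;>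
      simp only [e1, e2, e3, e4, e5] <;> assumption
  · intro A hA B hB
    rw [memX] at hA; rw [memX] at hB
    rcases hA with rfl|rfl|rfl|rfl|rfl <;> rcases hB with rfl|rfl|rfl|rfl|rfl <;>
      simp only [e1, e2, e3, e4, e5] <;>
      first
        | exact iff_of_true (Finset.Subset.refl _) (by decide)
        | exact iff_of_true (by assumption) (by decide)
        | exact iff_of_false (by assumption) (by decide)

lemma copyStructure (F' : Finset (Finset ℕ)) (h : ContainsInduced posetX F') :
    ∃ u ∈ F', ∃ v ∈ F', ∃ w ∈ F', ∃ b₁ ∈ F', ∃ b₂ ∈ F',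
      (¬ u ⊆ v) ∧ (¬ v ⊆ u) ∧ u ⊆ w ∧ u ≠ w ∧ v ⊆ w ∧ v ≠ w ∧
      w ⊆ b₁ ∧ w ≠ b₁ ∧ w ⊆ b₂ ∧ w ≠ b₂ ∧ (¬ b₁ ⊆ b₂) ∧ (¬ b₂ ⊆ b₁) := by
  obtain ⟨φ, hinj, hmem, hiff⟩ := h
  have m1 : ({1} : Finset ℕ) ∈ posetX := by decide
  have m2 : ({2} : Finset ℕ) ∈ posetX := by decide
  have m3 : ({1,2} : Finset ℕ) ∈ posetX := by decide
  have m4 : ({1,2,3} : Finset ℕ) ∈ posetX := by decide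
  have m5 : ({1,2,4} : Finset ℕ) ∈ posetX := by decide
  refine ⟨φ {1}, hmem _ m1, φ {2}, hmem _ m2, φ {1,2}, hmem _ m3,
    φ {1,2,3}, hmem _ m4, φ {1,2,4}, hmem _ m5, ?_, ?_, ?_, ?_, ?_, ?_, ?_, ?_, ?_, ?_, ?_, ?_⟩
  · exact fun h => (by decide : ¬ ({1} : Finset ℕ) ⊆ {2}) ((hiff _ m1 _ m2).1 h)
  · exact fun h => (by decide : ¬ ({2} : Finset ℕ) ⊆ {1}) ((hiff _ m2 _ m1).1 h)
  · exact (hiff _ m1 _ m3).2 (by decide)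
  · exact fun h => (by decide : ({1} : Finset ℕ) ≠ {1,2}) (hinj m1 m3 h)
  · exact (hiff _ m2 _ m3).2 (by decide)
  · exact fun h => (by decide : ({2} : Finset ℕ) ≠ {1,2}) (hinj m2 m3 h)
  · exact (hiff _ m3 _ m4).2 (by decide)
  · exact fun h => (by decide : ({1,2} : Finset ℕ) ≠ {1,2,3}) (hinj m3 m4 h)
  · exact (hiff _ m3 _ m5).2 (by decide)
  · exact fun h => (by decide : ({1,2} : Finset ℕ) ≠ {1,2,4}) (hinj m3 m5 h)
  · exact fun h => (by decide : ¬ ({1,2,3} : Finset ℕ) ⊆ {1,2,4}) ((hiff _ m4 _ m5).1 h)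
  · exact fun h => (by decide : ¬ ({1,2,4} : Finset ℕ) ⊆ {1,2,3}) ((hiff _ m5 _ m4).1 h)


def LowSet (F : Finset (Finset ℕ)) (A : Finset ℕ) : Prop :=
  A ∈ F ∧ ∃ p ∈ F, ∃ q ∈ F, A ⊆ p ∧ A ⊆ q ∧ ¬ p ⊆ q ∧ ¬ q ⊆ p

def HighSet (F : Finset (Finset ℕ)) (A : Finset ℕ) : Prop :=
  A ∈ F ∧ ∃ p ∈ F, ∃ q ∈ F, p ⊆ A ∧ q ⊆ A ∧ ¬ p ⊆ q ∧ ¬ q ⊆ p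

section Struct

variable {F : Finset (Finset ℕ)}

lemma not_low_high (hfree : ¬ ContainsInduced posetX F) {A : Finset ℕ} (hL : LowSet F A) (hH : HighSet F A) : False := by
  obtain ⟨hA, p, hp, q, hq, h1, h2, h3, h4⟩ := hL
  obtain ⟨-, p', hp', q', hq', h1', h2', h3', h4'⟩ := hH
  exact hfree (mkCopy F p' q' A p q hp' hq' hA hp hq h3' h4' h1' h2' h1 h2 h3 h4)

lemma low_mono {A U : Finset ℕ} (hL : LowSet F A) (hU : U ∈ F) (hUA : U ⊆ A) :
    LowSet F U := by
  obtain ⟨hA, p, hp, q, hq, h1, h2, h3, h4⟩ := hL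
  exact ⟨hU, p, hp, q, hq, hUA.trans h1, hUA.trans h2, h3, h4⟩

lemma high_mono {A U : Finset ℕ} (hH : HighSet F A) (hU : U ∈ F) (hAU : A ⊆ U) :
    HighSet F U := by
  obtain ⟨hA, p, hp, q, hq, h1, h2, h3, h4⟩ := hH
  exact ⟨hU, p, hp, q, hq, h1.trans hAU, h2.trans hAU, h3, h4⟩

lemma chain_below (hfree : ¬ ContainsInduced posetX F) {A u v : Finset ℕ} (hL : LowSet F A) (hu : u ∈ F) (hv : v ∈ F)
    (h1 : u ⊆ A) (h2 : v ⊆ A) : u ⊆ v ∨ v ⊆ u := by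
  by_contra hcon
  push_neg at hcon
  obtain ⟨hA, p, hp, q, hq, g1, g2, g3, g4⟩ := hL
  exact hfree (mkCopy F u v A p q hu hv hA hp hq hcon.1 hcon.2 h1 h2 g1 g2 g3 g4)

lemma chain_above (hfree : ¬ ContainsInduced posetX F) {A u v : Finset ℕ} (hH : HighSet F A) (hu : u ∈ F) (hv : v ∈ F)
    (h1 : A ⊆ u) (h2 : A ⊆ v) : u ⊆ v ∨ v ⊆ u := by
  by_contra hcon
  push_neg at hcon
  obtain ⟨hA, p, hp, q, hq, g1, g2, g3, g4⟩ := hH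
  exact hfree (mkCopy F p q A u v hp hq hA hu hv g3 g4 g1 g2 h1 h2 hcon.1 hcon.2)

end Struct

section Roles

variable {n : ℕ} {F : Finset (Finset ℕ)}

lemma roles (hsat : InducedSaturated n posetX F) {S : Finset ℕ} (hS : S ⊆ Finset.Icc 1 n) (hSF : S ∉ F) :
    (∃ C ∈ F, ∃ w ∈ F, ∃ b₁ ∈ F, ∃ b₂ ∈ F, (¬ C ⊆ S) ∧ (¬ S ⊆ C) ∧ C ⊆ w ∧ S ⊆ w ∧
      S ≠ w ∧ w ⊆ b₁ ∧ w ⊆ b₂ ∧ (¬ b₁ ⊆ b₂) ∧ (¬ b₂ ⊆ b₁)) ∨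
    (∃ u ∈ F, ∃ v ∈ F, ∃ b₁ ∈ F, ∃ b₂ ∈ F, u ⊆ S ∧ u ≠ S ∧ v ⊆ S ∧ v ≠ S ∧ (¬ u ⊆ v) ∧
      (¬ v ⊆ u) ∧ S ⊆ b₁ ∧ S ⊆ b₂ ∧ (¬ b₁ ⊆ b₂) ∧ (¬ b₂ ⊆ b₁)) ∨
    (∃ u ∈ F, ∃ v ∈ F, ∃ w ∈ F, ∃ C ∈ F, u ⊆ w ∧ v ⊆ w ∧ (¬ u ⊆ v) ∧ (¬ v ⊆ u) ∧
      w ⊆ S ∧ w ≠ S ∧ w ⊆ C ∧ (¬ C ⊆ S) ∧ (¬ S ⊆ C)) := by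
  obtain ⟨u, hu, v, hv, w, hw, b₁, hb₁, b₂, hb₂, huv, hvu, huw, nuw, hvw, nvw,
    hwb₁, nwb₁, hwb₂, nwb₂, h12, h21⟩ := copyStructure _ (hsat.2.2 S hS hSF)
  have nuv : u ≠ v := fun h => huv (h ▸ Finset.Subset.refl u)
  have nb : b₁ ≠ b₂ := fun h => h12 (h ▸ Finset.Subset.refl b₁)
  have nub₁ : u ≠ b₁ := by
    intro h
    exact nuw (Finset.Subset.antisymm huw (h ▸ hwb₁ : w ⊆ u))
  have nub₂ : u ≠ b₂ := by
    intro h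
    exact nuw (Finset.Subset.antisymm huw (h ▸ hwb₂ : w ⊆ u))
  have nvb₁ : v ≠ b₁ := by
    intro h
    exact nvw (Finset.Subset.antisymm hvw (h ▸ hwb₁ : w ⊆ v))
  have nvb₂ : v ≠ b₂ := by
    intro h
    exact nvw (Finset.Subset.antisymm hvw (h ▸ hwb₂ : w ⊆ v))
  -- resolve memberships
  rcases Finset.mem_insert.mp hu with rfl | huF
  · -- u = S : leg role
    have hvF : v ∈ F := ((Finset.mem_insert.mp hv).resolve_left (fun h => nuv h.symm))
    have hwF : w ∈ F := ((Finset.mem_insert.mp hw).resolve_left (fun h => nuw h.symm))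
    have hb₁F : b₁ ∈ F := ((Finset.mem_insert.mp hb₁).resolve_left (fun h => nub₁ h.symm))
    have hb₂F : b₂ ∈ F := ((Finset.mem_insert.mp hb₂).resolve_left (fun h => nub₂ h.symm))
    exact Or.inl ⟨v, hvF, w, hwF, b₁, hb₁F, b₂, hb₂F, hvu, huv, hvw, huw, nuw,
      hwb₁, hwb₂, h12, h21⟩
  rcases Finset.mem_insert.mp hv with rfl | hvF
  · -- v = S : leg role
    have hwF : w ∈ F := ((Finset.mem_insert.mp hw).resolve_left (fun h => nvw h.symm))
    have hb₁F : b₁ ∈ F := ((Finset.mem_insert.mp hb₁).resolve_left (fun h => nvb₁ h.symm))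
    have hb₂F : b₂ ∈ F := ((Finset.mem_insert.mp hb₂).resolve_left (fun h => nvb₂ h.symm))
    exact Or.inl ⟨u, huF, w, hwF, b₁, hb₁F, b₂, hb₂F, huv, hvu, huw, hvw, nvw,
      hwb₁, hwb₂, h12, h21⟩
  rcases Finset.mem_insert.mp hw with rfl | hwF
  · -- w = S : hip role
    have hb₁F : b₁ ∈ F := ((Finset.mem_insert.mp hb₁).resolve_left (fun h => nwb₁ h.symm))
    have hb₂F : b₂ ∈ F := ((Finset.mem_insert.mp hb₂).resolve_left (fun h => nwb₂ h.symm))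
    exact Or.inr (Or.inl ⟨u, huF, v, hvF, b₁, hb₁F, b₂, hb₂F, huw, nuw, hvw, nvw,
      huv, hvu, hwb₁, hwb₂, h12, h21⟩)
  rcases Finset.mem_insert.mp hb₁ with rfl | hb₁F
  · -- b₁ = S : top role
    have hb₂F : b₂ ∈ F := ((Finset.mem_insert.mp hb₂).resolve_left (fun h => nb h.symm))
    exact Or.inr (Or.inr ⟨u, huF, v, hvF, w, hwF, b₂, hb₂F, huw, hvw, huv, hvu,
      hwb₁, nwb₁, hwb₂, h21, h12⟩)
  rcases Finset.mem_insert.mp hb₂ with rfl | hb₂F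
  · -- b₂ = S : top role
    exact Or.inr (Or.inr ⟨u, huF, v, hvF, w, hwF, b₁, hb₁F, huw, hvw, huv, hvu,
      hwb₂, nwb₂, hwb₁, h12, h21⟩)
  · exact absurd (mkCopy F u v w b₁ b₂ huF hvF hwF hb₁F hb₂F huv hvu huw hvw
      hwb₁ hwb₂ h12 h21) hsat.2.1

end Roles

section Basic

variable {n : ℕ} {F : Finset (Finset ℕ)}

lemma comp_of_card_le_one {w u v : Finset ℕ} (hcard : w.card ≤ 1) (hu : u ⊆ w)
    (hv : v ⊆ w) : u ⊆ v ∨ v ⊆ u := by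
  rcases Finset.eq_empty_or_nonempty u with rfl | ⟨a, ha⟩
  · exact Or.inl (Finset.empty_subset v)
  · refine Or.inr fun b hb => ?_
    have : b = a := Finset.card_le_one.mp hcard b (hv hb) a (hu ha)
    exact this ▸ ha

lemma two_ne (hn : 3 ≤ n) (i : ℕ) :
    ∃ j₁ ∈ Finset.Icc 1 n, ∃ j₂ ∈ Finset.Icc 1 n, j₁ ≠ j₂ ∧ j₁ ≠ i ∧ j₂ ≠ i := by
  have h1 : (1 : ℕ) ∈ Finset.Icc 1 n := Finset.mem_Icc.mpr ⟨le_refl 1, by omega⟩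
  have h2 : (2 : ℕ) ∈ Finset.Icc 1 n := Finset.mem_Icc.mpr ⟨by omega, by omega⟩
  have h3 : (3 : ℕ) ∈ Finset.Icc 1 n := Finset.mem_Icc.mpr ⟨by omega, by omega⟩
  by_cases e1 : i = 1
  · exact ⟨2, h2, 3, h3, by omega, by omega, by omega⟩
  by_cases e2 : i = 2
  · exact ⟨1, h1, 3, h3, by omega, by omega, by omega⟩
  · exact ⟨1, h1, 2, h2, by omega, by omega, by omega⟩

lemma empty_mem (hsat : InducedSaturated n posetX F) : ∅ ∈ F := by
  by_contra h
  rcases roles hsat (Finset.empty_subset _) h with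
    ⟨C, -, w, -, b₁, -, b₂, -, -, hSC, -⟩ |
    ⟨u, -, v, -, b₁, -, b₂, -, hu1, hu2, -⟩ |
    ⟨u, -, v, -, w, -, C, -, -, -, -, -, hw1, hw2, -⟩
  · exact hSC (Finset.empty_subset C)
  · exact hu2 (Finset.subset_empty.mp hu1)
  · exact hw2 (Finset.subset_empty.mp hw1)

lemma full_mem (hsat : InducedSaturated n posetX F) : Finset.Icc 1 n ∈ F := by
  by_contra h
  rcases roles hsat (Finset.Subset.refl _) h with
    ⟨C, hC, w, hw, b₁, -, b₂, -, -, -, -, hSw, hSw', -⟩ |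
    ⟨u, -, v, -, b₁, hb₁, b₂, hb₂, -, -, -, -, -, -, hSb₁, hSb₂, h12, -⟩ |
    ⟨u, -, v, -, w, -, C, hC, -, -, -, -, -, -, -, hCS, -⟩
  · exact hSw' (Finset.Subset.antisymm hSw (hsat.1 w hw))
  · exact h12 ((hsat.1 b₁ hb₁).trans hSb₂)
  · exact hCS (hsat.1 C hC)

lemma incomp_of_not_mem (hsat : InducedSaturated n posetX F) {S : Finset ℕ}
    (hS : S ⊆ Finset.Icc 1 n) (hSF : S ∉ F) :
    ∃ p ∈ F, ∃ q ∈ F, (¬ p ⊆ q) ∧ (¬ q ⊆ p) := by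
  rcases roles hsat hS hSF with
    ⟨C, -, w, -, b₁, hb₁, b₂, hb₂, -, -, -, -, -, -, -, h12, h21⟩ |
    ⟨u, hu, v, hv, b₁, -, b₂, -, -, -, -, -, huv, hvu, -⟩ |
    ⟨u, hu, v, hv, w, -, C, -, -, -, huv, hvu, -⟩
  · exact ⟨b₁, hb₁, b₂, hb₂, h12, h21⟩
  · exact ⟨u, hu, v, hv, huv, hvu⟩
  · exact ⟨u, hu, v, hv, huv, hvu⟩

lemma exists_incomp (hsat : InducedSaturated n posetX F) (hn : 3 ≤ n) :
    ∃ p ∈ F, ∃ q ∈ F, (¬ p ⊆ q) ∧ (¬ q ⊆ p) := by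
  have h1 : ({1} : Finset ℕ) ⊆ Finset.Icc 1 n := by
    simp [Finset.singleton_subset_iff, Finset.mem_Icc]; omega
  have h2 : ({2} : Finset ℕ) ⊆ Finset.Icc 1 n := by
    simp [Finset.singleton_subset_iff, Finset.mem_Icc]; omega
  by_cases m1 : ({1} : Finset ℕ) ∈ F
  · by_cases m2 : ({2} : Finset ℕ) ∈ F
    · exact ⟨{1}, m1, {2}, m2, by decide, by decide⟩
    · exact incomp_of_not_mem hsat h2 m2
  · exact incomp_of_not_mem hsat h1 m1

lemma empty_low (hsat : InducedSaturated n posetX F) (hn : 3 ≤ n) : LowSet F ∅ := by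
  obtain ⟨p, hp, q, hq, hpq, hqp⟩ := exists_incomp hsat hn
  exact ⟨empty_mem hsat, p, hp, q, hq, Finset.empty_subset _, Finset.empty_subset _, hpq, hqp⟩

lemma full_high (hsat : InducedSaturated n posetX F) (hn : 3 ≤ n) :
    HighSet F (Finset.Icc 1 n) := by
  obtain ⟨p, hp, q, hq, hpq, hqp⟩ := exists_incomp hsat hn
  exact ⟨full_mem hsat, p, hp, q, hq, hsat.1 p hp, hsat.1 q hq, hpq, hqp⟩

lemma cover_low (hsat : InducedSaturated n posetX F) (hn : 3 ≤ n) {i : ℕ}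
    (hi : i ∈ Finset.Icc 1 n) : ∃ A, LowSet F A ∧ i ∈ A := by
  have hsub : ({i} : Finset ℕ) ⊆ Finset.Icc 1 n := Finset.singleton_subset_iff.mpr hi
  by_cases hsing : ({i} : Finset ℕ) ∈ F
  · by_contra hno
    push_neg at hno
    have hcomp : ∀ p ∈ F, ∀ q ∈ F, i ∈ p → i ∈ q → p ⊆ q ∨ q ⊆ p := by
      intro p hp q hq hip hiq
      by_contra hc
      push_neg at hc
      exact hno {i} ⟨hsing, p, hp, q, hq, Finset.singleton_subset_iff.mpr hip,
        Finset.singleton_subset_iff.mpr hiq, hc.1, hc.2⟩ (Finset.mem_singleton_self i)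
    have hj : ∃ j ∈ Finset.Icc 1 n, j ≠ i ∧ ({i, j} : Finset ℕ) ∉ F := by
      by_contra hc
      push_neg at hc
      obtain ⟨j₁, hj₁, j₂, hj₂, hne, hne1, hne2⟩ := two_ne hn i
      have p1 : ({i, j₁} : Finset ℕ) ∈ F := hc j₁ hj₁ hne1
      have p2 : ({i, j₂} : Finset ℕ) ∈ F := hc j₂ hj₂ hne2
      have hmem1 : i ∈ ({i, j₁} : Finset ℕ) := Finset.mem_insert_self _ _
      have hmem2 : i ∈ ({i, j₂} : Finset ℕ) := Finset.mem_insert_self _ _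
      rcases hcomp _ p1 _ p2 hmem1 hmem2 with h | h
      · have : j₁ ∈ ({i, j₂} : Finset ℕ) := h (Finset.mem_insert_of_mem (Finset.mem_singleton_self _))
        simp only [Finset.mem_insert, Finset.mem_singleton] at this
        tauto
      · have : j₂ ∈ ({i, j₁} : Finset ℕ) := h (Finset.mem_insert_of_mem (Finset.mem_singleton_self _))
        simp only [Finset.mem_insert, Finset.mem_singleton] at this
        tauto
    obtain ⟨j, hjI, hji, hijF⟩ := hj
    have hijsub : ({i, j} : Finset ℕ) ⊆ Finset.Icc 1 n := by
      intro x hx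
      simp only [Finset.mem_insert, Finset.mem_singleton] at hx
      rcases hx with rfl | rfl
      exacts [hi, hjI]
    rcases roles hsat hijsub hijF with
      ⟨C, -, w, hw, b₁, hb₁, b₂, hb₂, -, -, -, hSw, -, hwb₁, hwb₂, h12, h21⟩ |
      ⟨u, -, v, -, b₁, hb₁, b₂, hb₂, -, -, -, -, -, -, hSb₁, hSb₂, h12, h21⟩ |
      ⟨u, hu, v, hv, w, -, C, -, hu1, hv1, huv, hvu, hwS, hwS', -⟩
    · exact hno w ⟨hw, b₁, hb₁, b₂, hb₂, hwb₁, hwb₂, h12, h21⟩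
        (hSw (Finset.mem_insert_self _ _))
    · rcases hcomp _ hb₁ _ hb₂ (hSb₁ (Finset.mem_insert_self _ _))
        (hSb₂ (Finset.mem_insert_self _ _)) with h | h
      exacts [h12 h, h21 h]
    · have hcard : w.card ≤ 1 := by
        have hss : w ⊂ ({i, j} : Finset ℕ) := ⟨hwS, fun h => hwS' (Finset.Subset.antisymm hwS h)⟩
        have := Finset.card_lt_card hss
        have hij : ({i, j} : Finset ℕ).card ≤ 2 :=
          (Finset.card_insert_le _ _).trans (by simp)
        omega
      rcases comp_of_card_le_one hcard hu1 hv1 with h | h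
      exacts [huv h, hvu h]
  · rcases roles hsat hsub hsing with
      ⟨C, -, w, hw, b₁, hb₁, b₂, hb₂, -, -, -, hSw, -, hwb₁, hwb₂, h12, h21⟩ |
      ⟨u, -, v, -, b₁, -, b₂, -, hu1, hu2, -, -, huv, -⟩ |
      ⟨u, -, v, -, w, -, C, -, hu1, hv1, huv, -, hwS, hwS', -⟩
    · exact ⟨w, ⟨hw, b₁, hb₁, b₂, hb₂, hwb₁, hwb₂, h12, h21⟩,
        hSw (Finset.mem_singleton_self i)⟩
    · rcases Finset.subset_singleton_iff.mp hu1 with rfl | rfl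
      · exact absurd (Finset.empty_subset v) huv
      · exact absurd rfl hu2
    · have hw0 : w = ∅ := by
        rcases Finset.subset_singleton_iff.mp hwS with rfl | rfl
        · rfl
        · exact absurd rfl hwS'
      subst hw0
      exact absurd (Finset.subset_empty.mp hu1 ▸ Finset.empty_subset v) huv

end Basic

section Basic2

variable {n : ℕ} {F : Finset (Finset ℕ)}

lemma between_erase {s w : Finset ℕ} {x : ℕ} (hx : x ∈ s) (h1 : s.erase x ⊆ w)
    (h2 : w ⊆ s) : w = s.erase x ∨ w = s := by
  by_cases hxw : x ∈ w
  · right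
    refine Finset.Subset.antisymm h2 ?_
    have h3 : insert x (s.erase x) ⊆ w := Finset.insert_subset hxw h1
    rwa [Finset.insert_erase hx] at h3
  · left
    exact Finset.Subset.antisymm (Finset.subset_erase.mpr ⟨h2, hxw⟩) h1

lemma no_incomp_between {s : Finset ℕ} {x : ℕ} (hx : x ∈ s) {b₁ b₂ : Finset ℕ}
    (h1 : s.erase x ⊆ b₁) (h1' : b₁ ⊆ s) (h2 : s.erase x ⊆ b₂) (h2' : b₂ ⊆ s)
    (h12 : ¬ b₁ ⊆ b₂) (h21 : ¬ b₂ ⊆ b₁) : False := by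
  rcases between_erase hx h1 h1' with rfl | rfl <;>
    rcases between_erase hx h2 h2' with rfl | rfl
  exacts [h12 (Finset.Subset.refl _), h12 (Finset.erase_subset _ _),
    h21 (Finset.erase_subset _ _), h12 (Finset.Subset.refl _)]

lemma cover_high (hsat : InducedSaturated n posetX F) (hn : 3 ≤ n) {i : ℕ}
    (hi : i ∈ Finset.Icc 1 n) : ∃ B, HighSet F B ∧ i ∉ B := by
  set I := Finset.Icc 1 n with hI
  by_cases hco : I.erase i ∈ F
  · by_contra hno
    push_neg at hno
    have hcompd : ∀ p ∈ F, ∀ q ∈ F, i ∉ p → i ∉ q → p ⊆ q ∨ q ⊆ p := by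
      intro p hp q hq hip hiq
      by_contra hc
      push_neg at hc
      have hp' : p ⊆ I.erase i := Finset.subset_erase.mpr ⟨hsat.1 p hp, hip⟩
      have hq' : q ⊆ I.erase i := Finset.subset_erase.mpr ⟨hsat.1 q hq, hiq⟩
      exact (Finset.notMem_erase i I)
        (hno _ ⟨hco, p, hp, q, hq, hp', hq', hc.1, hc.2⟩)
    have hj : ∃ j ∈ I, j ≠ i ∧ ((I.erase i).erase j ∉ F) := by
      by_contra hc
      push_neg at hc
      obtain ⟨j₁, hj₁, j₂, hj₂, hne, hne1, hne2⟩ := two_ne hn i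
      have p1 := hc j₁ hj₁ hne1
      have p2 := hc j₂ hj₂ hne2
      have hip1 : i ∉ (I.erase i).erase j₁ :=
        fun h => (Finset.notMem_erase i I) (Finset.mem_of_mem_erase h)
      have hip2 : i ∉ (I.erase i).erase j₂ :=
        fun h => (Finset.notMem_erase i I) (Finset.mem_of_mem_erase h)
      have hm1 : j₂ ∈ (I.erase i).erase j₁ :=
        Finset.mem_erase.mpr ⟨hne.symm, Finset.mem_erase.mpr ⟨hne2, hj₂⟩⟩
      have hm2 : j₁ ∈ (I.erase i).erase j₂ :=
        Finset.mem_erase.mpr ⟨hne, Finset.mem_erase.mpr ⟨hne1, hj₁⟩⟩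
      rcases hcompd _ p1 _ p2 hip1 hip2 with h | h
      · exact (Finset.mem_erase.mp (h hm1)).1 rfl
      · exact (Finset.mem_erase.mp (h hm2)).1 rfl
    obtain ⟨j, hjI, hji, hSF⟩ := hj
    have hij : i ≠ j := fun h => hji h.symm
    have hSsub : (I.erase i).erase j ⊆ I := (Finset.erase_subset _ _).trans (Finset.erase_subset _ _)
    have hiS : i ∉ (I.erase i).erase j :=
      fun h => (Finset.notMem_erase i I) (Finset.mem_of_mem_erase h)
    have hjS : j ∉ (I.erase i).erase j := Finset.notMem_erase _ _
    rcases roles hsat hSsub hSF with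
      ⟨C, hC, w, hw, b₁, hb₁, b₂, hb₂, hCS, hSC, hCw, hSw, hSw', hwb₁, hwb₂, h12, h21⟩ |
      ⟨u, hu, v, hv, b₁, -, b₂, -, hu1, -, hv1, -, huv, hvu, -⟩ |
      ⟨u, hu, v, hv, w, hw, C, -, hu1, hv1, huv, hvu, hwS, -, -⟩
    · -- S is a leg
      have hwI : w ⊆ I := hsat.1 w hw
      by_cases hiw : i ∈ w
      · by_cases hjw : j ∈ w
        · -- w = I
          have hIw : I ⊆ w := by
            intro x hx
            by_cases hxi : x = i
            · exact hxi ▸ hiw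
            by_cases hxj : x = j
            · exact hxj ▸ hjw
            · exact hSw (Finset.mem_erase.mpr ⟨hxj, Finset.mem_erase.mpr ⟨hxi, hx⟩⟩)
          exact h12 ((hsat.1 b₁ hb₁).trans (hIw.trans hwb₂))
        · -- w = I.erase j
          have hw1 : I.erase j ⊆ w := by
            intro x hx
            obtain ⟨hxj, hxI⟩ := Finset.mem_erase.mp hx
            by_cases hxi : x = i
            · exact hxi ▸ hiw
            · exact hSw (Finset.mem_erase.mpr ⟨hxj, Finset.mem_erase.mpr ⟨hxi, hxI⟩⟩)
          exact no_incomp_between hjI (hw1.trans hwb₁) (hsat.1 b₁ hb₁)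
            (hw1.trans hwb₂) (hsat.1 b₂ hb₂) h12 h21
      · by_cases hjw : j ∈ w
        · -- w = I.erase i
          have hw1 : I.erase i ⊆ w := by
            intro x hx
            obtain ⟨hxi, hxI⟩ := Finset.mem_erase.mp hx
            by_cases hxj : x = j
            · exact hxj ▸ hjw
            · exact hSw (Finset.mem_erase.mpr ⟨hxj, Finset.mem_erase.mpr ⟨hxi, hxI⟩⟩)
          exact no_incomp_between hi (hw1.trans hwb₁) (hsat.1 b₁ hb₁)
            (hw1.trans hwb₂) (hsat.1 b₂ hb₂) h12 h21
        · -- w ⊆ S, so w = S contradiction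
          have : w ⊆ (I.erase i).erase j :=
            Finset.subset_erase.mpr ⟨Finset.subset_erase.mpr ⟨hwI, hiw⟩, hjw⟩
          exact hSw' (Finset.Subset.antisymm hSw this)
    · -- S is a hip : u, v incomparable, both avoid i
      have hiu : i ∉ u := fun h => hiS (hu1 h)
      have hiv : i ∉ v := fun h => hiS (hv1 h)
      rcases hcompd _ hu _ hv hiu hiv with h | h
      exacts [huv h, hvu h]
    · -- S is a top : w is high and avoids i
      have hiw : i ∉ w := fun h => hiS (hwS h)
      exact hiw (hno w ⟨hw, u, hu, v, hv, hu1, hv1, huv, hvu⟩)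
  · -- I.erase i ∉ F
    have hsub : I.erase i ⊆ I := Finset.erase_subset _ _
    rcases roles hsat hsub hco with
      ⟨C, hC, w, hw, b₁, hb₁, b₂, hb₂, hCS, hSC, hCw, hSw, hSw', hwb₁, hwb₂, h12, h21⟩ |
      ⟨u, -, v, -, b₁, hb₁, b₂, hb₂, -, -, -, -, -, -, hSb₁, hSb₂, h12, h21⟩ |
      ⟨u, hu, v, hv, w, hw, C, -, hu1, hv1, huv, hvu, hwS, -, -⟩
    · rcases between_erase hi hSw (hsat.1 w hw) with h | h
      · exact (hSw' h.symm).elim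
      · rw [h] at hwb₂
        exact (h12 ((hsat.1 b₁ hb₁).trans hwb₂)).elim
    · exact (no_incomp_between hi hSb₁ (hsat.1 b₁ hb₁) hSb₂ (hsat.1 b₂ hb₂) h12 h21).elim
    · exact ⟨w, ⟨hw, u, hu, v, hv, hu1, hv1, huv, hvu⟩,
        fun h => (Finset.notMem_erase i I) (hwS h)⟩

end Basic2

def IPair (F : Finset (Finset ℕ)) (i : ℕ) (T P : Finset ℕ) : Prop :=
  LowSet F T ∧ P ∈ F ∧ P ⊆ T ∧ i ∈ T ∧ i ∉ P ∧ ∀ U ∈ F, U ⊆ T → U ≠ T → U ⊆ P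

section IPairSec

variable {n : ℕ} {F : Finset (Finset ℕ)}

lemma ipair_in (hsat : InducedSaturated n posetX F) {A : Finset ℕ} (hA : LowSet F A)
    {i : ℕ} (hiA : i ∈ A) : ∃ T P, IPair F i T P ∧ T ⊆ A := by
  have hfree := hsat.2.1
  classical
  set 𝒰 := F.filter (fun U => U ⊆ A ∧ i ∈ U) with h𝒰
  have hA𝒰 : A ∈ 𝒰 := Finset.mem_filter.mpr ⟨hA.1, Finset.Subset.refl A, hiA⟩
  obtain ⟨T, hT𝒰, hTmin⟩ : ∃ T ∈ 𝒰, ∀ x ∈ 𝒰, ¬ x < T := by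
    obtain ⟨T, hT⟩ := Finset.exists_minimal (s := 𝒰) ⟨A, hA𝒰⟩
    exact ⟨T, hT.1, fun x hx hlt => lt_irrefl _ (lt_of_lt_of_le hlt (hT.2 hx hlt.le))⟩
  have hTmem := Finset.mem_filter.mp hT𝒰
  have hTF : T ∈ F := hTmem.1
  have hTA : T ⊆ A := hTmem.2.1
  have hiT : i ∈ T := hTmem.2.2
  have hLowT : LowSet F T := low_mono hA hTF hTA
  set 𝒱 := F.filter (fun U => U ⊆ T ∧ U ≠ T) with h𝒱
  have hball : (∅ : Finset ℕ) ∈ 𝒱 := by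
    refine Finset.mem_filter.mpr ⟨empty_mem hsat, Finset.empty_subset T, ?_⟩
    exact fun h => (Finset.ne_empty_of_mem hiT) h.symm
  obtain ⟨P, hP𝒱, hPmax⟩ : ∃ P ∈ 𝒱, ∀ x ∈ 𝒱, ¬ P < x := by
    obtain ⟨P, hP⟩ := Finset.exists_maximal (s := 𝒱) ⟨∅, hball⟩
    exact ⟨P, hP.1, fun x hx hlt => lt_irrefl _ (lt_of_lt_of_le hlt (hP.2 hx hlt.le))⟩
  have hPmem := Finset.mem_filter.mp hP𝒱
  have hPF : P ∈ F := hPmem.1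
  have hPT : P ⊆ T := hPmem.2.1
  have hPne : P ≠ T := hPmem.2.2
  have hprop : ∀ U ∈ F, U ⊆ T → U ≠ T → U ⊆ P := by
    intro U hU hUT hUne
    rcases chain_below hfree hLowT hU hPF hUT hPT with h | h
    · exact h
    · rcases eq_or_ne P U with rfl | hne
      · exact Finset.Subset.refl _
      · exact absurd ⟨h, fun h' => hne (Finset.Subset.antisymm h h')⟩
          (hPmax U (Finset.mem_filter.mpr ⟨hU, hUT, hUne⟩))
  have hiP : i ∉ P := by
    intro hiP
    have hP𝒰 : P ∈ 𝒰 := Finset.mem_filter.mpr ⟨hPF, hPT.trans hTA, hiP⟩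
    exact hTmin P hP𝒰 ⟨hPT, fun h => hPne (Finset.Subset.antisymm hPT h)⟩
  exact ⟨T, P, ⟨hLowT, hPF, hPT, hiT, hiP, hprop⟩, hTA⟩

lemma mainL (hsat : InducedSaturated n posetX F) (hn : 3 ≤ n) {i : ℕ}
    (hi : i ∈ Finset.Icc 1 n) : ∃ T, LowSet F T ∧ i ∈ T ∧ T.erase i ∈ F := by
  have hfree := hsat.2.1
  have step : ∀ T P, IPair F i T P →
      T = insert i P ∨ ∃ T' P', IPair F i T' P' ∧ P ⊂ P' := by
    intro T P ⟨hLowT, hPF, hPT, hiT, hiP, hprop⟩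
    by_cases heq : T = insert i P
    · exact Or.inl heq
    right
    have hSsub : insert i P ⊆ Finset.Icc 1 n := Finset.insert_subset hi (hsat.1 P hPF)
    have hST : insert i P ⊆ T := Finset.insert_subset hiT hPT
    have hSne : insert i P ≠ T := fun h => heq h.symm
    have hSF : insert i P ∉ F :=
      fun h => hiP (hprop _ h hST hSne (Finset.mem_insert_self i P))
    rcases roles hsat hSsub hSF with
      ⟨C, hC, w, hw, b₁, hb₁, b₂, hb₂, hCS, hSC, hCw, hSw, hSwne, hwb₁, hwb₂, h12, h21⟩ |
      ⟨u, hu, v, hv, b₁, -, b₂, -, hu1, -, hv1, -, huv, hvu, -⟩ |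
      ⟨u, hu, v, hv, w, -, C, -, hu1, hv1, huv, hvu, hwS, -, -⟩
    · -- leg role
      have hLoww : LowSet F w := ⟨hw, b₁, hb₁, b₂, hb₂, hwb₁, hwb₂, h12, h21⟩
      have hPw : P ⊆ w := (Finset.subset_insert i P).trans hSw
      have hPC : P ⊆ C := by
        rcases chain_below hfree hLoww hC hPF hCw hPw with h | h
        · exact absurd (h.trans (Finset.subset_insert i P)) hCS
        · exact h
      have hiC : i ∉ C := fun h => hSC (Finset.insert_subset h hPC)
      obtain ⟨T', P', hTP', hT'w⟩ :=
        ipair_in hsat hLoww (hSw (Finset.mem_insert_self i P))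
      have hCP' : C ⊆ P' := by
        rcases chain_below hfree hLoww hC hTP'.1.1 hCw hT'w with h | h
        · exact hTP'.2.2.2.2.2 C hC h (fun hEq => hiC (hEq ▸ hTP'.2.2.2.1))
        · exact absurd (h hTP'.2.2.2.1) hiC
      obtain ⟨x, hxC, hxS⟩ := Finset.not_subset.mp hCS
      have hxP : x ∉ P := fun h => hxS (Finset.subset_insert i P h)
      refine ⟨T', P', hTP', hPC.trans hCP', fun hsub => hxP (hsub (hCP' hxC))⟩
    · -- hip role impossible
      rcases chain_below hfree hLowT hu hv (hu1.trans hST) (hv1.trans hST) with h | h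
      exacts [(huv h).elim, (hvu h).elim]
    · -- top role impossible
      rcases chain_below hfree hLowT hu hv ((hu1.trans hwS).trans hST)
        ((hv1.trans hwS).trans hST) with h | h
      exacts [(huv h).elim, (hvu h).elim]
  have main : ∀ k T P, IPair F i T P → n ≤ P.card + k →
      ∃ T, LowSet F T ∧ i ∈ T ∧ T.erase i ∈ F := by
    intro k
    induction k with
    | zero =>
      intro T P hTP hcard
      exfalso
      have hPI : P ⊆ Finset.Icc 1 n := hsat.1 P hTP.2.1
      have hcard' : (Finset.Icc 1 n).card ≤ P.card := by simp; omega
      have heq : P = Finset.Icc 1 n := Finset.eq_of_subset_of_card_le hPI hcard'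
      exact hTP.2.2.2.2.1 (heq.symm ▸ hi)
    | succ k ih =>
      intro T P hTP hcard
      rcases step T P hTP with heq | ⟨T', P', hTP', hlt⟩
      · refine ⟨T, hTP.1, hTP.2.2.2.1, ?_⟩
        rw [heq, Finset.erase_insert hTP.2.2.2.2.1]
        exact hTP.2.1
      · exact ih T' P' hTP' (by have := Finset.card_lt_card hlt; omega)
  obtain ⟨A, hA, hiA⟩ := cover_low hsat hn hi
  obtain ⟨T, P, hTP, -⟩ := ipair_in hsat hA hiA
  exact main n T P hTP (by omega)

end IPairSec

def DPair (F : Finset (Finset ℕ)) (i : ℕ) (B Q : Finset ℕ) : Prop :=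
  HighSet F B ∧ Q ∈ F ∧ B ⊆ Q ∧ i ∉ B ∧ i ∈ Q ∧ ∀ U ∈ F, B ⊆ U → U ≠ B → Q ⊆ U

section DPairSec

variable {n : ℕ} {F : Finset (Finset ℕ)}

lemma dpair_in (hsat : InducedSaturated n posetX F) {A : Finset ℕ} (hA : HighSet F A)
    {i : ℕ} (hiA : i ∉ A) (hi : i ∈ Finset.Icc 1 n) :
    ∃ B Q, DPair F i B Q ∧ A ⊆ B := by
  have hfree := hsat.2.1
  classical
  set 𝒰 := F.filter (fun U => A ⊆ U ∧ i ∉ U) with h𝒰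
  have hA𝒰 : A ∈ 𝒰 := Finset.mem_filter.mpr ⟨hA.1, Finset.Subset.refl A, hiA⟩
  obtain ⟨B, hB𝒰, hBmax⟩ : ∃ B ∈ 𝒰, ∀ x ∈ 𝒰, ¬ B < x := by
    obtain ⟨B, hB⟩ := Finset.exists_maximal (s := 𝒰) ⟨A, hA𝒰⟩
    exact ⟨B, hB.1, fun x hx hlt => lt_irrefl _ (lt_of_lt_of_le hlt (hB.2 hx hlt.le))⟩
  have hBmem := Finset.mem_filter.mp hB𝒰
  have hBF : B ∈ F := hBmem.1
  have hAB : A ⊆ B := hBmem.2.1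
  have hiB : i ∉ B := hBmem.2.2
  have hHighB : HighSet F B := high_mono hA hBF hAB
  set 𝒱 := F.filter (fun U => B ⊆ U ∧ U ≠ B) with h𝒱
  have hIccV : Finset.Icc 1 n ∈ 𝒱 := by
    refine Finset.mem_filter.mpr ⟨full_mem hsat, hsat.1 B hBF, ?_⟩
    exact fun h => hiB (h ▸ hi)
  obtain ⟨Q, hQ𝒱, hQmin⟩ : ∃ Q ∈ 𝒱, ∀ x ∈ 𝒱, ¬ x < Q := by
    obtain ⟨Q, hQ⟩ := Finset.exists_minimal (s := 𝒱) ⟨_, hIccV⟩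
    exact ⟨Q, hQ.1, fun x hx hlt => lt_irrefl _ (lt_of_lt_of_le hlt (hQ.2 hx hlt.le))⟩
  have hQmem := Finset.mem_filter.mp hQ𝒱
  have hQF : Q ∈ F := hQmem.1
  have hBQ : B ⊆ Q := hQmem.2.1
  have hQne : Q ≠ B := hQmem.2.2
  have hprop : ∀ U ∈ F, B ⊆ U → U ≠ B → Q ⊆ U := by
    intro U hU hBU hUne
    rcases chain_above hfree hHighB hU hQF hBU hBQ with h | h
    · rcases eq_or_ne U Q with rfl | hne
      · exact Finset.Subset.refl _
      · exact absurd ⟨h, fun h' => hne (Finset.Subset.antisymm h h')⟩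
          (hQmin U (Finset.mem_filter.mpr ⟨hU, hBU, hUne⟩))
    · exact h
  have hiQ : i ∈ Q := by
    by_contra hiQ
    have hQ𝒰 : Q ∈ 𝒰 := Finset.mem_filter.mpr ⟨hQF, hAB.trans hBQ, hiQ⟩
    exact hBmax Q hQ𝒰 ⟨hBQ, fun h => hQne (Finset.Subset.antisymm h hBQ)⟩
  exact ⟨B, Q, ⟨hHighB, hQF, hBQ, hiB, hiQ, hprop⟩, hAB⟩

lemma mainH (hsat : InducedSaturated n posetX F) (hn : 3 ≤ n) {i : ℕ}
    (hi : i ∈ Finset.Icc 1 n) : ∃ B, HighSet F B ∧ i ∉ B ∧ insert i B ∈ F := by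
  have hfree := hsat.2.1
  have step : ∀ B Q, DPair F i B Q →
      B = Q.erase i ∨ ∃ B' Q', DPair F i B' Q' ∧ Q' ⊂ Q := by
    intro B Q ⟨hHighB, hQF, hBQ, hiB, hiQ, hprop⟩
    by_cases heq : B = Q.erase i
    · exact Or.inl heq
    right
    have hSsub : Q.erase i ⊆ Finset.Icc 1 n := (Finset.erase_subset _ _).trans (hsat.1 Q hQF)
    have hBS : B ⊆ Q.erase i := Finset.subset_erase.mpr ⟨hBQ, hiB⟩
    have hSne : Q.erase i ≠ B := fun h => heq h.symm
    have hSF : Q.erase i ∉ F := by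
      intro h
      exact (Finset.notMem_erase i Q) (hprop _ h hBS hSne hiQ)
    rcases roles hsat hSsub hSF with
      ⟨C, hC, w, hw, b₁, hb₁, b₂, hb₂, hCS, hSC, hCw, hSw, hSwne, hwb₁, hwb₂, h12, h21⟩ |
      ⟨u, -, v, -, b₁, hb₁, b₂, hb₂, -, -, -, -, -, -, hSb₁, hSb₂, h12, h21⟩ |
      ⟨u, hu, v, hv, w, hw, C, hC, hu1, hv1, huv, hvu, hwS, hwSne, hwC, hCS, hSC⟩
    · -- leg role impossible
      rcases chain_above hfree hHighB hb₁ hb₂ (hBS.trans (hSw.trans hwb₁))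
        (hBS.trans (hSw.trans hwb₂)) with h | h
      exacts [(h12 h).elim, (h21 h).elim]
    · -- hip role impossible
      rcases chain_above hfree hHighB hb₁ hb₂ (hBS.trans hSb₁) (hBS.trans hSb₂) with h | h
      exacts [(h12 h).elim, (h21 h).elim]
    · -- top role
      have hHighw : HighSet F w := ⟨hw, u, hu, v, hv, hu1, hv1, huv, hvu⟩
      have hwQ : w ⊆ Q := hwS.trans (Finset.erase_subset _ _)
      have hCQ : C ⊆ Q := by
        rcases chain_above hfree hHighw hC hQF hwC hwQ with h | h
        · exact h
        · exact absurd ((Finset.erase_subset _ _).trans h : Q.erase i ⊆ C) hSC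
      have hiC : i ∈ C := by
        by_contra hiC
        exact hCS (Finset.subset_erase.mpr ⟨hCQ, hiC⟩)
      have hiw : i ∉ w := fun h => (Finset.notMem_erase i Q) (hwS h)
      obtain ⟨B', Q', hBQ', hwB'⟩ := dpair_in hsat hHighw hiw hi
      have hQ'C : Q' ⊆ C := by
        rcases chain_above hfree hHighw hC hBQ'.1.1 hwC hwB' with h | h
        · exact absurd (h hiC) hBQ'.2.2.2.1
        · exact hBQ'.2.2.2.2.2 C hC h (fun hEq => hBQ'.2.2.2.1 (hEq ▸ hiC))
      obtain ⟨x, hxS, hxC⟩ := Finset.not_subset.mp hSC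
      have hxQ : x ∈ Q := Finset.mem_of_mem_erase hxS
      refine ⟨B', Q', hBQ', Finset.ssubset_iff_subset_ne.mpr
        ⟨hQ'C.trans hCQ, fun h => hxC (hQ'C (h ▸ hxQ))⟩⟩
  have main : ∀ k B Q, DPair F i B Q → Q.card ≤ k →
      ∃ B, HighSet F B ∧ i ∉ B ∧ insert i B ∈ F := by
    intro k
    induction k with
    | zero =>
      intro B Q hBQ hcard
      exfalso
      have : Q = ∅ := Finset.card_eq_zero.mp (Nat.le_zero.mp hcard)
      exact (Finset.notMem_empty i) (this ▸ hBQ.2.2.2.2.1)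
    | succ k ih =>
      intro B Q hBQ hcard
      rcases step B Q hBQ with heq | ⟨B', Q', hBQ', hlt⟩
      · refine ⟨B, hBQ.1, hBQ.2.2.2.1, ?_⟩
        rw [heq, Finset.insert_erase hBQ.2.2.2.2.1]
        exact hBQ.2.1
      · exact ih B' Q' hBQ' (by have := Finset.card_lt_card hlt; omega)
  obtain ⟨A, hA, hiA⟩ := cover_high hsat hn hi
  obtain ⟨B, Q, hBQ, -⟩ := dpair_in hsat hA hiA hi
  exact main Q.card B Q hBQ le_rfl

end DPairSec

section Count

variable {n : ℕ} {F : Finset (Finset ℕ)}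

lemma not_high_empty : ¬ HighSet F ∅ := by
  rintro ⟨-, p, -, q, -, h1, h2, h3, -⟩
  rw [Finset.subset_empty] at h1 h2
  exact h3 (by rw [h1, h2])

lemma not_low_full (hsat : InducedSaturated n posetX F) : ¬ LowSet F (Finset.Icc 1 n) := by
  rintro ⟨-, p, hp, q, hq, h1, h2, h3, -⟩
  exact h3 ((hsat.1 p hp).trans h2)

lemma lower_bound (hsat : InducedSaturated n posetX F) (hn : 3 ≤ n) :
    2 * n + 2 ≤ F.card := by
  classical
  have hfree := hsat.2.1
  have hL : ∀ i, ∃ T, i ∈ Finset.Icc 1 n → (LowSet F T ∧ i ∈ T ∧ T.erase i ∈ F) := by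
    intro i
    by_cases h : i ∈ Finset.Icc 1 n
    · obtain ⟨T, hT⟩ := mainL hsat hn h
      exact ⟨T, fun _ => hT⟩
    · exact ⟨∅, fun h' => absurd h' h⟩
  choose t ht using hL
  have hH : ∀ i, ∃ B, i ∈ Finset.Icc 1 n → (HighSet F B ∧ i ∉ B ∧ insert i B ∈ F) := by
    intro i
    by_cases h : i ∈ Finset.Icc 1 n
    · obtain ⟨B, hB⟩ := mainH hsat hn h
      exact ⟨B, fun _ => hB⟩
    · exact ⟨∅, fun h' => absurd h' h⟩
  choose b hb using hH
  set S₁ : Finset (Finset ℕ) := insert ∅ ((Finset.Icc 1 n).image t) with hS₁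
  set S₂ : Finset (Finset ℕ) := insert (Finset.Icc 1 n) ((Finset.Icc 1 n).image b) with hS₂
  have htinj : Set.InjOn t (Finset.Icc 1 n) := by
    intro i hi j hj hEq
    simp only [Finset.mem_coe] at hi hj
    by_contra hne
    have hiT : i ∈ t i := (ht i hi).2.1
    have hjT : j ∈ t i := hEq ▸ (ht j hj).2.1
    have h1 : (t i).erase i ∈ F := (ht i hi).2.2
    have h2 : (t i).erase j ∈ F := by rw [hEq]; exact (ht j hj).2.2
    rcases chain_below hfree (ht i hi).1 h1 h2 (Finset.erase_subset _ _)
      (Finset.erase_subset _ _) with h | h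
    · exact (Finset.mem_erase.mp (h (Finset.mem_erase.mpr ⟨fun hc => hne hc.symm, hjT⟩))).1 rfl
    · exact (Finset.mem_erase.mp (h (Finset.mem_erase.mpr ⟨hne, hiT⟩))).1 rfl
  have hbinj : Set.InjOn b (Finset.Icc 1 n) := by
    intro i hi j hj hEq
    simp only [Finset.mem_coe] at hi hj
    by_contra hne
    have hiB : i ∉ b i := (hb i hi).2.1
    have hjB : j ∉ b i := hEq ▸ (hb j hj).2.1
    have h1 : insert i (b i) ∈ F := (hb i hi).2.2
    have h2 : insert j (b i) ∈ F := by rw [hEq]; exact (hb j hj).2.2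
    rcases chain_above hfree (hb i hi).1 h1 h2 (Finset.subset_insert _ _)
      (Finset.subset_insert _ _) with h | h
    · rcases Finset.mem_insert.mp (h (Finset.mem_insert_self i _)) with h' | h'
      exacts [hne h', hiB h']
    · rcases Finset.mem_insert.mp (h (Finset.mem_insert_self j _)) with h' | h'
      exacts [hne h'.symm, hjB h']
  have hcard₁ : S₁.card = n + 1 := by
    rw [hS₁, Finset.card_insert_of_notMem, Finset.card_image_of_injOn htinj]
    · simp
    · intro hc
      obtain ⟨i, hi, hEq⟩ := Finset.mem_image.mp hc
      exact Finset.notMem_empty i (hEq ▸ (ht i hi).2.1)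
  have hcard₂ : S₂.card = n + 1 := by
    rw [hS₂, Finset.card_insert_of_notMem, Finset.card_image_of_injOn hbinj]
    · simp
    · intro hc
      obtain ⟨i, hi, hEq⟩ := Finset.mem_image.mp hc
      exact (hb i hi).2.1 (hEq ▸ hi)
  have hsub : S₁ ∪ S₂ ⊆ F := by
    intro x hx
    rcases Finset.mem_union.mp hx with hx | hx
    · rcases Finset.mem_insert.mp hx with rfl | hx
      · exact empty_mem hsat
      · obtain ⟨i, hi, hEq⟩ := Finset.mem_image.mp hx
        exact hEq ▸ (ht i hi).1.1
    · rcases Finset.mem_insert.mp hx with rfl | hx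
      · exact full_mem hsat
      · obtain ⟨i, hi, hEq⟩ := Finset.mem_image.mp hx
        exact hEq ▸ (hb i hi).1.1
  have hdisj : Disjoint S₁ S₂ := by
    rw [Finset.disjoint_left]
    intro x hx₁ hx₂
    have hlow : LowSet F x ∨ x = ∅ := by
      rcases Finset.mem_insert.mp hx₁ with rfl | hx
      · exact Or.inr rfl
      · obtain ⟨i, hi, hEq⟩ := Finset.mem_image.mp hx
        exact Or.inl (hEq ▸ (ht i hi).1)
    have hhigh : HighSet F x ∨ x = Finset.Icc 1 n := by
      rcases Finset.mem_insert.mp hx₂ with rfl | hx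
      · exact Or.inr rfl
      · obtain ⟨i, hi, hEq⟩ := Finset.mem_image.mp hx
        exact Or.inl (hEq ▸ (hb i hi).1)
    rcases hlow with hlow | rfl
    · rcases hhigh with hhigh | rfl
      · exact not_low_high hfree hlow hhigh
      · exact not_low_full hsat hlow
    · rcases hhigh with hhigh | hfullempty
      · exact not_high_empty hhigh
      · have h1 : (1 : ℕ) ∈ Finset.Icc 1 n := Finset.mem_Icc.mpr ⟨le_refl 1, by omega⟩
        exact Finset.notMem_empty 1 (hfullempty ▸ h1)
  calc 2 * n + 2 = S₁.card + S₂.card := by omega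
  _ = (S₁ ∪ S₂).card := (Finset.card_union_of_disjoint hdisj).symm
  _ ≤ F.card := Finset.card_le_card hsub

end Count

section Upper

def Gfam (n : ℕ) : Finset (Finset ℕ) :=
  insert ∅ (insert (Finset.Icc 1 n)
    (((Finset.Icc 1 n).image fun i => {i}) ∪
     ((Finset.Icc 1 n).image fun i => (Finset.Icc 1 n).erase i)))

variable {n : ℕ}

lemma mem_Gfam {A : Finset ℕ} : A ∈ Gfam n ↔
    A = ∅ ∨ A = Finset.Icc 1 n ∨ (∃ i ∈ Finset.Icc 1 n, A = {i}) ∨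
    (∃ i ∈ Finset.Icc 1 n, A = (Finset.Icc 1 n).erase i) := by
  simp [Gfam, eq_comm]

lemma Gfam_bdd : ∀ A ∈ Gfam n, A ⊆ Finset.Icc 1 n := by
  intro A hA
  rcases mem_Gfam.mp hA with rfl | rfl | ⟨i, hi, rfl⟩ | ⟨i, hi, rfl⟩
  · exact Finset.empty_subset _
  · exact Finset.Subset.refl _
  · exact Finset.singleton_subset_iff.mpr hi
  · exact Finset.erase_subset _ _

lemma Gfam_free (hn : 3 ≤ n) : ¬ ContainsInduced posetX (Gfam n) := by
  intro h
  obtain ⟨u, hu, v, hv, w, hw, b₁, hb₁, b₂, hb₂, huv, hvu, huw, nuw, hvw, nvw,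
    hwb₁, nwb₁, hwb₂, nwb₂, h12, h21⟩ := copyStructure _ h
  rcases mem_Gfam.mp hw with rfl | rfl | ⟨x, hx, rfl⟩ | ⟨x, hx, rfl⟩
  · exact nuw (Finset.subset_empty.mp huw)
  · exact nwb₁ (Finset.Subset.antisymm hwb₁ (Gfam_bdd b₁ hb₁))
  · rcases Finset.subset_singleton_iff.mp huw with rfl | rfl
    · exact huv (Finset.empty_subset v)
    · exact nuw rfl
  · rcases between_erase hx hwb₁ (Gfam_bdd b₁ hb₁) with h1 | h1
    · exact nwb₁ h1.symm
    · rcases between_erase hx hwb₂ (Gfam_bdd b₂ hb₂) with h2 | h2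
      · exact nwb₂ h2.symm
      · exact h12 (by rw [h1, h2])

lemma Gfam_sat (hn : 3 ≤ n) : InducedSaturated n posetX (Gfam n) := by
  refine ⟨Gfam_bdd, Gfam_free hn, ?_⟩
  intro S hS hSG
  have hScard : 1 < S.card := by
    rcases Nat.lt_or_ge S.card 2 with h | h
    · exfalso
      interval_cases hc : S.card
      · exact hSG (mem_Gfam.mpr (Or.inl (Finset.card_eq_zero.mp hc)))
      · obtain ⟨x, rfl⟩ := Finset.card_eq_one.mp hc
        exact hSG (mem_Gfam.mpr (Or.inr (Or.inr (Or.inl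
          ⟨x, hS (Finset.mem_singleton_self x), rfl⟩))))
    · exact h
  have hKcard : 1 < (Finset.Icc 1 n \ S).card := by
    rcases Nat.lt_or_ge (Finset.Icc 1 n \ S).card 2 with h | h
    · exfalso
      interval_cases hc : (Finset.Icc 1 n \ S).card
      · have : Finset.Icc 1 n ⊆ S := by
          intro x hx
          by_contra hxS
          exact Finset.notMem_empty x
            ((Finset.card_eq_zero.mp hc) ▸ Finset.mem_sdiff.mpr ⟨hx, hxS⟩)
        exact hSG (mem_Gfam.mpr (Or.inr (Or.inl (Finset.Subset.antisymm hS this))))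
      · obtain ⟨x, hxeq⟩ := Finset.card_eq_one.mp hc
        have hxI : x ∈ Finset.Icc 1 n := by
          have : x ∈ Finset.Icc 1 n \ S := hxeq ▸ Finset.mem_singleton_self x
          exact (Finset.mem_sdiff.mp this).1
        have hSeq : S = (Finset.Icc 1 n).erase x := by
          rw [Finset.erase_eq, ← hxeq, Finset.sdiff_sdiff_self_left,
            Finset.inter_eq_right.mpr hS]
        exact hSG (mem_Gfam.mpr (Or.inr (Or.inr (Or.inr ⟨x, hxI, hSeq⟩))))
    · exact h
  obtain ⟨a, ha, b, hb, hab⟩ := Finset.one_lt_card.mp hScard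
  obtain ⟨c, hc, d, hd, hcd⟩ := Finset.one_lt_card.mp hKcard
  have hcI : c ∈ Finset.Icc 1 n := (Finset.mem_sdiff.mp hc).1
  have hcS : c ∉ S := (Finset.mem_sdiff.mp hc).2
  have hdI : d ∈ Finset.Icc 1 n := (Finset.mem_sdiff.mp hd).1
  have hdS : d ∉ S := (Finset.mem_sdiff.mp hd).2
  apply mkCopy (insert S (Gfam n)) {a} {b} S ((Finset.Icc 1 n).erase c)
    ((Finset.Icc 1 n).erase d)
  · exact Finset.mem_insert_of_mem (mem_Gfam.mpr (Or.inr (Or.inr (Or.inl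
      ⟨a, hS ha, rfl⟩))))
  · exact Finset.mem_insert_of_mem (mem_Gfam.mpr (Or.inr (Or.inr (Or.inl
      ⟨b, hS hb, rfl⟩))))
  · exact Finset.mem_insert_self S _
  · exact Finset.mem_insert_of_mem (mem_Gfam.mpr (Or.inr (Or.inr (Or.inr
      ⟨c, hcI, rfl⟩))))
  · exact Finset.mem_insert_of_mem (mem_Gfam.mpr (Or.inr (Or.inr (Or.inr
      ⟨d, hdI, rfl⟩))))
  · exact fun h => hab (Finset.mem_singleton.mp (h (Finset.mem_singleton_self a)))
  · exact fun h => hab ((Finset.mem_singleton.mp (h (Finset.mem_singleton_self b))).symm)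
  · exact Finset.singleton_subset_iff.mpr ha
  · exact Finset.singleton_subset_iff.mpr hb
  · exact Finset.subset_erase.mpr ⟨hS, hcS⟩
  · exact Finset.subset_erase.mpr ⟨hS, hdS⟩
  · intro h
    exact (Finset.mem_erase.mp (h (Finset.mem_erase.mpr ⟨hcd.symm, hdI⟩))).1 rfl
  · intro h
    exact (Finset.mem_erase.mp (h (Finset.mem_erase.mpr ⟨hcd, hcI⟩))).1 rfl

lemma Gfam_card (hn : 3 ≤ n) : (Gfam n).card = 2 * n + 2 := by
  have hIcard : (Finset.Icc 1 n).card = n := by simp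
  have hinj1 : Set.InjOn (fun i => ({i} : Finset ℕ)) (Finset.Icc 1 n) := by
    intro i _ j _ h
    exact Finset.singleton_injective h
  have hinj2 : Set.InjOn (fun i => (Finset.Icc 1 n).erase i) (Finset.Icc 1 n) := by
    intro i hi j hj h
    simp only [Finset.mem_coe] at hi hj
    by_contra hne
    have h' : (Finset.Icc 1 n).erase i = (Finset.Icc 1 n).erase j := h
    have : i ∈ (Finset.Icc 1 n).erase j := Finset.mem_erase.mpr ⟨hne, hi⟩
    rw [← h'] at this
    exact (Finset.mem_erase.mp this).1 rfl
  have hdisj : Disjoint ((Finset.Icc 1 n).image fun i => ({i} : Finset ℕ))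
      ((Finset.Icc 1 n).image fun i => (Finset.Icc 1 n).erase i) := by
    rw [Finset.disjoint_left]
    rintro x hx₁ hx₂
    obtain ⟨i, hi, rfl⟩ := Finset.mem_image.mp hx₁
    obtain ⟨j, hj, hEq⟩ := Finset.mem_image.mp hx₂
    have hc : ((Finset.Icc 1 n).erase j).card = n - 1 := by
      rw [Finset.card_erase_of_mem hj, hIcard]
    rw [hEq] at hc
    simp at hc
    omega
  have hfull : Finset.Icc 1 n ∉ ((Finset.Icc 1 n).image fun i => ({i} : Finset ℕ)) ∪
      ((Finset.Icc 1 n).image fun i => (Finset.Icc 1 n).erase i) := by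
    intro h
    rcases Finset.mem_union.mp h with h | h
    · obtain ⟨i, hi, hEq⟩ := Finset.mem_image.mp h
      have := hIcard ▸ congrArg Finset.card hEq
      simp at this
      omega
    · obtain ⟨i, hi, hEq⟩ := Finset.mem_image.mp h
      have h2 : ((Finset.Icc 1 n).erase i).card = n - 1 := by
        rw [Finset.card_erase_of_mem hi, hIcard]
      rw [hEq, hIcard] at h2
      omega
  have hempty : (∅ : Finset ℕ) ∉ insert (Finset.Icc 1 n)
      (((Finset.Icc 1 n).image fun i => ({i} : Finset ℕ)) ∪
       ((Finset.Icc 1 n).image fun i => (Finset.Icc 1 n).erase i)) := by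
    intro h
    rcases Finset.mem_insert.mp h with h | h
    · have := hIcard ▸ congrArg Finset.card h
      simp at this
      omega
    · rcases Finset.mem_union.mp h with h | h
      · obtain ⟨i, hi, hEq⟩ := Finset.mem_image.mp h
        exact Finset.notMem_empty i (hEq ▸ Finset.mem_singleton_self i)
      · obtain ⟨i, hi, hEq⟩ := Finset.mem_image.mp h
        have h2 : ((Finset.Icc 1 n).erase i).card = n - 1 := by
          rw [Finset.card_erase_of_mem hi, hIcard]
        rw [hEq] at h2
        simp at h2
        omega
  rw [Gfam, Finset.card_insert_of_notMem hempty, Finset.card_insert_of_notMem hfull,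
    Finset.card_union_of_disjoint hdisj, Finset.card_image_of_injOn hinj1,
    Finset.card_image_of_injOn hinj2, hIcard]
  omega

end Upper

/-- For `n ≥ 3`, `sat*(n, X) = 2n + 2`. -/
theorem sat_star_x (n : ℕ) (hn : 3 ≤ n) : satStar n posetX = 2 * n + 2 := by
  have hmem : (2 * n + 2) ∈
      {k | ∃ F : Finset (Finset ℕ), InducedSaturated n posetX F ∧ F.card = k} :=
    ⟨Gfam n, Gfam_sat hn, Gfam_card hn⟩
  rw [satStar]
  refine le_antisymm (Nat.sInf_le hmem) (le_csInf ⟨_, hmem⟩ ?_)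
  rintro k ⟨F, hF, rfl⟩
  exact lower_bound hF hn
end

section
/- Let P be a poset and suppose F₀ ⊆ 2^{[n₀]} is an induced P-saturated family such that for some i ∈ [n₀] there are no sets A, B ∈ F₀ with A \ B = {i}. Then for every n ≥ n₀ we have sat*(n, P) ≤ |F₀|. -/
/-- Transfer of a copy of `P` from `insert S' F` to `insert S (F.image f)`. -/
lemma transfer_copy {P F : Finset (Finset ℕ)} {f : Finset ℕ → Finset ℕ} {S S' : Finset ℕ}
    (hinj : ∀ A ∈ F, ∀ B ∈ F, f A = f B → A = B)
    (hmono : ∀ A ∈ F, ∀ B ∈ F, (f A ⊆ f B ↔ A ⊆ B))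
    (hS : S ∉ F.image f) (hS' : S' ∉ F)
    (hbr : ∀ C ∈ F, (S ⊆ f C ↔ S' ⊆ C) ∧ (f C ⊆ S ↔ C ⊆ S'))
    (h : ContainsInduced P (insert S' F)) : ContainsInduced P (insert S (F.image f)) := by
  obtain ⟨φ, hφinj, hφmem, hφord⟩ := h
  have hmem' : ∀ A ∈ P, φ A ≠ S' → φ A ∈ F := by
    intro A hA hne
    rcases Finset.mem_insert.1 (hφmem A hA) with h | h
    · exact absurd h hne
    · exact h
  refine ⟨fun A => if φ A = S' then S else f (φ A), ?_, ?_, ?_⟩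
  · intro A hA B hB hAB
    simp only at hAB
    by_cases h1 : φ A = S' <;> by_cases h2 : φ B = S' <;> simp [h1, h2] at hAB
    · exact hφinj hA hB (h1.trans h2.symm)
    · exact absurd (Finset.mem_image_of_mem f (hmem' B hB h2)) (hAB ▸ hS)
    · exact absurd (Finset.mem_image_of_mem f (hmem' A hA h1)) (hAB.symm ▸ hS)
    · exact hφinj hA hB (hinj _ (hmem' A hA h1) _ (hmem' B hB h2) hAB)
  · intro A hA
    by_cases h1 : φ A = S'
    · simp only [h1, if_pos]; exact Finset.mem_insert_self _ _
    · simp only [if_neg h1]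
      exact Finset.mem_insert_of_mem (Finset.mem_image_of_mem f (hmem' A hA h1))
  · intro A hA B hB
    rw [← hφord A hA B hB]
    show (if φ A = S' then S else f (φ A)) ⊆ (if φ B = S' then S else f (φ B)) ↔ φ A ⊆ φ B
    by_cases h1 : φ A = S' <;> by_cases h2 : φ B = S'
    · rw [if_pos h1, if_pos h2, h1, h2]
      exact ⟨fun _ => subset_rfl, fun _ => subset_rfl⟩
    · rw [if_pos h1, if_neg h2, h1, (hbr _ (hmem' B hB h2)).1]
    · rw [if_neg h1, if_pos h2, h2, (hbr _ (hmem' A hA h1)).2]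
    · rw [if_neg h1, if_neg h2]
      exact hmono _ (hmem' A hA h1) _ (hmem' B hB h2)

section Step

variable (n₀ i : ℕ)

/-- The blow-up map from `2^[n₀]` to `2^[n₀+1]`. -/
def fm (A : Finset ℕ) : Finset ℕ := if i ∈ A then insert (n₀+1) A else A

lemma step (P : Finset (Finset ℕ)) (F : Finset (Finset ℕ))
    (hi : i ∈ Finset.Icc 1 n₀)
    (hsat : InducedSaturated n₀ P F)
    (hno : ∀ A ∈ F, ∀ B ∈ F, A \ B ≠ {i}) :
    ∃ G, InducedSaturated (n₀+1) P G ∧ G.card = F.card ∧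
      ∀ A ∈ G, ∀ B ∈ G, A \ B ≠ {i} := by
  obtain ⟨hsub, hnc, hins⟩ := hsat
  set m := n₀ + 1 with hm
  have him : i ≠ m := by
    simp only [Finset.mem_Icc] at hi; omega
  have hmnot : ∀ A ∈ F, m ∉ A := by
    intro A hA hmA
    have := hsub A hA hmA
    simp only [Finset.mem_Icc] at this; omega
  have hretr : ∀ A : Finset ℕ, m ∉ A → (fm n₀ i A).erase m = A := by
    intro A hA
    by_cases h : i ∈ A <;> simp [fm, h, ← hm, Finset.erase_insert hA, Finset.erase_eq_of_notMem hA]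
  have hfsub : ∀ A ∈ F, fm n₀ i A ⊆ Finset.Icc 1 m := by
    intro A hA
    have h1 : A ⊆ Finset.Icc 1 m := (hsub A hA).trans (Finset.Icc_subset_Icc_right (by omega))
    by_cases h : i ∈ A
    · simp only [fm, if_pos h]
      exact Finset.insert_subset (by simp only [Finset.mem_Icc]; omega) h1
    · simpa only [fm, if_neg h] using h1
  have hmono : ∀ A ∈ F, ∀ B ∈ F, (fm n₀ i A ⊆ fm n₀ i B ↔ A ⊆ B) := by
    intro A hA B hB
    constructor
    · intro h
      have := Finset.erase_subset_erase m h
      rwa [hretr A (hmnot A hA), hretr B (hmnot B hB)] at this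
    · intro h
      by_cases h1 : i ∈ A
      · have h2 : i ∈ B := h h1
        simp only [fm, if_pos h1, if_pos h2]
        exact Finset.insert_subset_insert m h
      · simp only [fm, if_neg h1]
        by_cases h2 : i ∈ B <;> simp [if_pos, if_neg, h2]
        · exact h.trans (Finset.subset_insert m B)
        · exact h
  have hinj : ∀ A ∈ F, ∀ B ∈ F, fm n₀ i A = fm n₀ i B → A = B := by
    intro A hA B hB h
    rw [← hretr A (hmnot A hA), ← hretr B (hmnot B hB), h]
  refine ⟨F.image (fm n₀ i), ⟨?_, ?_, ?_⟩, ?_, ?_⟩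
  · intro A hA
    obtain ⟨B, hB, rfl⟩ := Finset.mem_image.1 hA
    exact hfsub B hB
  · -- no induced copy in the image
    rintro ⟨φ, hφinj, hφmem, hφord⟩
    refine hnc ⟨fun A => (φ A).erase m, ?_, ?_, ?_⟩
    · intro A hA B hB h
      obtain ⟨A', hA', hA'e⟩ := Finset.mem_image.1 (hφmem A hA)
      obtain ⟨B', hB', hB'e⟩ := Finset.mem_image.1 (hφmem B hB)
      simp only at h
      rw [← hA'e, ← hB'e, hretr A' (hmnot A' hA'), hretr B' (hmnot B' hB')] at h
      exact hφinj hA hB (by rw [← hA'e, ← hB'e, h])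
    · intro A hA
      obtain ⟨A', hA', hA'e⟩ := Finset.mem_image.1 (hφmem A hA)
      show (φ A).erase m ∈ F
      rw [← hA'e, hretr A' (hmnot A' hA')]; exact hA'
    · intro A hA B hB
      obtain ⟨A', hA', hA'e⟩ := Finset.mem_image.1 (hφmem A hA)
      obtain ⟨B', hB', hB'e⟩ := Finset.mem_image.1 (hφmem B hB)
      show (φ A).erase m ⊆ (φ B).erase m ↔ A ⊆ B
      rw [← hA'e, ← hB'e, hretr A' (hmnot A' hA'), hretr B' (hmnot B' hB'),
        ← hφord A hA B hB, ← hA'e, ← hB'e, hmono A' hA' B' hB']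
  · -- saturation
    intro S hSsub hSmem
    obtain ⟨S', hS'sub, hS'mem, hbr⟩ : ∃ S', S' ⊆ Finset.Icc 1 n₀ ∧ S' ∉ F ∧
        ∀ C ∈ F, (S ⊆ fm n₀ i C ↔ S' ⊆ C) ∧ (fm n₀ i C ⊆ S ↔ C ⊆ S') := by
      have hnotim : ∀ A ∈ F, fm n₀ i A ≠ S := by
        intro A hA hAe
        exact hSmem (hAe ▸ Finset.mem_image_of_mem _ hA)
      have hSl : S.erase m ⊆ Finset.Icc 1 n₀ := by
        intro x hx
        obtain ⟨hx1, hx2⟩ := Finset.mem_erase.1 hx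
        have := hSsub hx2
        simp only [Finset.mem_Icc] at this ⊢
        omega
      by_cases hiS : i ∈ S <;> by_cases hmS : m ∈ S
      · -- i ∈ S, m ∈ S : take S' = S.erase m
        refine ⟨S.erase m, hSl, ?_, ?_⟩
        · intro hmem
          refine hnotim _ hmem ?_
          have hie : i ∈ S.erase m := Finset.mem_erase.2 ⟨him, hiS⟩
          simp only [fm, if_pos hie]
          exact Finset.insert_erase hmS
        · intro C hC
          have hmC := hmnot C hC
          by_cases hc : i ∈ C
          · simp only [fm, if_pos hc]
            refine ⟨Finset.subset_insert_iff, ?_⟩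
            rw [Finset.insert_subset_iff, Finset.subset_erase]
            tauto
          · simp only [fm, if_neg hc]
            constructor
            · constructor
              · intro h; exact absurd (h hmS) hmC
              · intro h; exact absurd (h (Finset.mem_erase.2 ⟨him, hiS⟩)) hc
            · rw [Finset.subset_erase]; tauto
      · -- i ∈ S, m ∉ S
        have hS0 : S ⊆ Finset.Icc 1 n₀ := by
          rw [← Finset.erase_eq_of_notMem hmS]; exact hSl
        by_cases hD : ∃ D ∈ F, i ∈ D ∧ D ⊆ S
        · -- take S' = S.erase i
          obtain ⟨D, hD, hiD, hDS⟩ := hD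
          have hK : ∀ C ∈ F, i ∉ C → ¬ (S.erase i ⊆ C) := by
            intro C hC hic hsc
            refine hno D hD C hC ?_
            ext x
            simp only [Finset.mem_sdiff, Finset.mem_singleton]
            constructor
            · rintro ⟨hx1, hx2⟩
              by_contra hxi
              exact hx2 (hsc (Finset.mem_erase.2 ⟨hxi, hDS hx1⟩))
            · rintro rfl; exact ⟨hiD, hic⟩
          refine ⟨S.erase i, (Finset.erase_subset i S).trans hS0, ?_, ?_⟩
          · intro hmem
            exact hK _ hmem (Finset.notMem_erase i S) subset_rfl
          · intro C hC
            have hmC := hmnot C hC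
            by_cases hc : i ∈ C
            · simp only [fm, if_pos hc]
              constructor
              · rw [Finset.subset_insert_iff, Finset.erase_eq_of_notMem hmS]
                constructor
                · intro h; exact (Finset.erase_subset i S).trans h
                · intro h
                  intro x hx
                  by_cases hxi : x = i
                  · exact hxi ▸ hc
                  · exact h (Finset.mem_erase.2 ⟨hxi, hx⟩)
              · constructor
                · intro h; exact absurd (h (Finset.mem_insert_self m C)) hmS
                · intro h; exact absurd (Finset.mem_erase.1 (h hc)).1 (by simp)
            · simp only [fm, if_neg hc]
              constructor
              · constructor
                · intro h; exact absurd (h hiS) hc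
                · intro h; exact absurd h (hK C hC hc)
              · rw [Finset.subset_erase]; tauto
        · -- take S' = S
          push_neg at hD
          refine ⟨S, hS0, ?_, ?_⟩
          · intro hmem; exact hD S hmem hiS subset_rfl
          · intro C hC
            have hmC := hmnot C hC
            by_cases hc : i ∈ C
            · simp only [fm, if_pos hc]
              constructor
              · rw [Finset.subset_insert_iff, Finset.erase_eq_of_notMem hmS]
              · constructor
                · intro h; exact absurd (h (Finset.mem_insert_self m C)) hmS
                · intro h; exact absurd h (hD C hC hc)
            · simp only [fm, if_neg hc]
              exact ⟨trivial, trivial⟩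
      · -- i ∉ S, m ∈ S
        have hiSl : i ∉ S.erase m := fun h => hiS (Finset.mem_erase.1 h).2
        by_cases hC : ∃ C ∈ F, S.erase m ⊆ C ∧ i ∉ C
        · -- take S' = insert i (S.erase m)
          obtain ⟨C₀, hC₀, hslC₀, hiC₀⟩ := hC
          have hK : ∀ D ∈ F, i ∈ D → ¬ (D ⊆ insert i (S.erase m)) := by
            intro D hD hiD hsub'
            refine hno D hD C₀ hC₀ ?_
            ext x
            simp only [Finset.mem_sdiff, Finset.mem_singleton]
            constructor
            · rintro ⟨hx1, hx2⟩
              by_contra hxi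
              rcases Finset.mem_insert.1 (hsub' hx1) with h | h
              · exact hxi h
              · exact hx2 (hslC₀ h)
            · rintro rfl; exact ⟨hiD, hiC₀⟩
          refine ⟨insert i (S.erase m), Finset.insert_subset hi hSl, ?_, ?_⟩
          · intro hmem
            exact hK _ hmem (Finset.mem_insert_self i _) subset_rfl
          · intro C hC'
            have hmC := hmnot C hC'
            by_cases hc : i ∈ C
            · simp only [fm, if_pos hc]
              constructor
              · rw [Finset.subset_insert_iff, Finset.insert_subset_iff]
                tauto
              · constructor
                · intro h
                  have h1 : C ⊆ S := (Finset.subset_insert m C).trans h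
                  have h2 : i ∈ S.erase m := Finset.mem_erase.2 ⟨him, h1 hc⟩
                  exact absurd (Finset.mem_erase.1 h2).2 hiS
                · intro h; exact absurd h (hK C hC' hc)
            · simp only [fm, if_neg hc]
              constructor
              · constructor
                · intro h; exact absurd (h hmS) hmC
                · intro h; exact absurd (h (Finset.mem_insert_self i _)) hc
              · constructor
                · intro h
                  refine fun x hx => Finset.mem_insert_of_mem ?_
                  exact Finset.mem_erase.2 ⟨fun hxm => hmC (hxm ▸ hx), h hx⟩
                · intro h
                  intro x hx
                  rcases Finset.mem_insert.1 (h hx) with rfl | h2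
                  · exact absurd hx hc
                  · exact (Finset.mem_erase.1 h2).2
        · -- take S' = S.erase m
          push_neg at hC
          refine ⟨S.erase m, hSl, ?_, ?_⟩
          · intro hmem
            exact hiSl (hC _ hmem subset_rfl)
          · intro C hC'
            have hmC := hmnot C hC'
            by_cases hc : i ∈ C
            · simp only [fm, if_pos hc]
              refine ⟨Finset.subset_insert_iff, ?_⟩
              rw [Finset.insert_subset_iff, Finset.subset_erase]
              tauto
            · simp only [fm, if_neg hc]
              constructor
              · constructor
                · intro h; exact absurd (h hmS) hmC
                · intro h; exact absurd (hC C hC' h) hc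
              · rw [Finset.subset_erase]; tauto
      · -- i ∉ S, m ∉ S : take S' = S
        have hS0 : S ⊆ Finset.Icc 1 n₀ := by
          rw [← Finset.erase_eq_of_notMem hmS]; exact hSl
        refine ⟨S, hS0, ?_, ?_⟩
        · intro hmem
          refine hnotim _ hmem ?_
          simp only [fm, if_neg hiS]
        · intro C hC
          have hmC := hmnot C hC
          by_cases hc : i ∈ C
          · simp only [fm, if_pos hc]
            constructor
            · rw [Finset.subset_insert_iff, Finset.erase_eq_of_notMem hmS]
            · constructor
              · intro h; exact absurd (h (Finset.mem_insert_self m C)) hmS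
              · intro h; exact absurd (h hc) hiS
          · simp only [fm, if_neg hc]
            exact ⟨trivial, trivial⟩
    exact transfer_copy hinj hmono hSmem hS'mem hbr (hins S' hS'sub hS'mem)
  · exact Finset.card_image_of_injOn (fun A hA B hB => hinj A hA B hB)
  · intro A hA B hB
    obtain ⟨A', hA', rfl⟩ := Finset.mem_image.1 hA
    obtain ⟨B', hB', rfl⟩ := Finset.mem_image.1 hB
    intro h
    by_cases h1 : i ∈ A'
    · by_cases h2 : i ∈ B'
      · have he : insert m A' \ insert m B' = A' \ B' := by
          ext x
          simp only [Finset.mem_sdiff, Finset.mem_insert, not_or]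
          constructor
          · rintro ⟨(rfl | hx1), hx2, hx3⟩
            · exact absurd rfl hx2
            · exact ⟨hx1, hx3⟩
          · rintro ⟨hx1, hx2⟩
            exact ⟨Or.inr hx1, fun hxm => hmnot A' hA' (hxm ▸ hx1), hx2⟩
        have h' : insert m A' \ insert m B' = {i} := by
          simpa only [fm, if_pos h1, if_pos h2] using h
        rw [he] at h'
        exact hno A' hA' B' hB' h'
      · have hmmem : m ∈ fm n₀ i A' \ fm n₀ i B' := by
          rw [Finset.mem_sdiff]
          constructor
          · simp only [fm, if_pos h1]; exact Finset.mem_insert_self _ _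
          · simp only [fm, if_neg h2]; exact hmnot B' hB'
        rw [h] at hmmem
        exact him (Finset.mem_singleton.1 hmmem).symm
    · have : i ∉ fm n₀ i A' \ fm n₀ i B' := by
        simp only [fm, if_neg h1, Finset.mem_sdiff]
        intro ⟨hx, _⟩
        by_cases h2 : i ∈ A'
        · exact h1 h2
        · exact h1 hx
      rw [h] at this
      exact this (Finset.mem_singleton_self i)

end Step

/-- If `F₀ ⊆ 2^[n₀]` is induced `P`-saturated and for some `i ∈ [n₀]` no `A, B ∈ F₀`
satisfy `A \ B = {i}`, then `sat*(n, P) ≤ |F₀|` for every `n ≥ n₀`. -/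
theorem blowup_lemma (P : Finset (Finset ℕ)) (n₀ : ℕ) (F₀ : Finset (Finset ℕ))
    (hF₀ : InducedSaturated n₀ P F₀) (i : ℕ) (hi : i ∈ Finset.Icc 1 n₀)
    (hno : ¬ ∃ A ∈ F₀, ∃ B ∈ F₀, A \ B = {i}) :
    ∀ n, n₀ ≤ n → satStar n P ≤ F₀.card := by
  push_neg at hno
  have key : ∀ k, ∃ F, InducedSaturated (n₀ + k) P F ∧ F.card = F₀.card ∧
      ∀ A ∈ F, ∀ B ∈ F, A \ B ≠ {i} := by
    intro k
    induction k with
    | zero => exact ⟨F₀, hF₀, rfl, hno⟩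
    | succ k ih =>
      obtain ⟨F, h1, h2, h3⟩ := ih
      have hi' : i ∈ Finset.Icc 1 (n₀ + k) := by
        simp only [Finset.mem_Icc] at hi ⊢; omega
      obtain ⟨G, g1, g2, g3⟩ := step (n₀ + k) i P F hi' h1 h3
      exact ⟨G, g1, g2.trans h2, g3⟩
  intro n hn
  obtain ⟨F, h1, h2, _⟩ := key (n - n₀)
  rw [Nat.add_sub_cancel' hn] at h1
  have : F₀.card ∈ {k | ∃ F' : Finset (Finset ℕ), InducedSaturated n P F' ∧ F'.card = k} :=
    ⟨F, h1, h2⟩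
  exact Nat.sInf_le this
end

section
/- For all integers n and ℓ with n - 1 > ℓ ≥ 2, sat*(n, ∧_{ℓ+1}) ≤ n + 2^{ℓ+1} - ℓ - 1. Specifically, the family consisting of ∅, all singletons {i} for i ∈ [n], all subsets of {1,...,ℓ}, and all proper supersets of [n] \ {1,...,ℓ} is induced ∧_{ℓ+1}-saturated of this size. -/
/-- The poset `∧_ℓ`: legs `{1}, {2}` below the chain `{1,2,3} ⊂ {1,2,3,4} ⊂ … ⊂ {1,…,ℓ+2}`
of length `ℓ`. -/
def wedgePoset (l : ℕ) : Finset (Finset ℕ) :=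
  insert {1} (insert {2} ((Finset.range l).image fun j => Finset.Icc 1 (j + 3)))

/-- The family: `∅`, all singletons `{i}` for `i ∈ [n]`, all subsets of `{1,…,ℓ}`,
and all proper supersets of `[n] \ {1,…,ℓ}`. -/
def wedgeFamily (n l : ℕ) : Finset (Finset ℕ) :=
  insert ∅ (((Finset.Icc 1 n).image fun i => ({i} : Finset ℕ)) ∪
    (Finset.Icc 1 l).powerset ∪
    ((Finset.Icc 1 n).powerset.filter fun T => Finset.Icc (l + 1) n ⊂ T))

def chainTo (A B : Finset ℕ) (i : ℕ) : Finset ℕ :=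
  A ∪ (((B \ A).sort (·≤·)).take i).toFinset

lemma chainTo_zero (A B : Finset ℕ) : chainTo A B 0 = A := by
  simp [chainTo]

lemma subset_chainTo (A B : Finset ℕ) (i : ℕ) : A ⊆ chainTo A B i :=
  Finset.subset_union_left

lemma chainTo_subset {A B : Finset ℕ} (h : A ⊆ B) (i : ℕ) : chainTo A B i ⊆ B := by
  apply Finset.union_subset h
  intro x hx
  have := List.take_subset i _ (List.mem_toFinset.mp hx)
  have := (Finset.mem_sort (α := ℕ) (·≤·)).mp this
  exact (Finset.mem_sdiff.mp this).1

lemma chainTo_mono (A B : Finset ℕ) {i j : ℕ} (h : i ≤ j) :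
    chainTo A B i ⊆ chainTo A B j := by
  apply Finset.union_subset_union_right
  intro x hx
  rw [List.mem_toFinset] at hx ⊢
  have : ((B \ A).sort (·≤·)).take i = (((B \ A).sort (·≤·)).take j).take i := by
    rw [List.take_take, min_eq_left h]
  rw [this] at hx
  exact List.take_subset _ _ hx

lemma chainTo_card (A B : Finset ℕ) (i : ℕ) :
    (chainTo A B i).card = A.card + min i (B \ A).card := by
  rw [chainTo, Finset.card_union_of_disjoint]
  · congr 1
    rw [List.card_toFinset, List.Nodup.dedup ((Finset.sort_nodup _ _).sublist (List.take_sublist _ _)),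
      List.length_take, Finset.length_sort]
  · rw [Finset.disjoint_right]
    intro x hx
    have := List.take_subset i _ (List.mem_toFinset.mp hx)
    exact (Finset.mem_sdiff.mp ((Finset.mem_sort (α := ℕ) (·≤·)).mp this)).2

lemma chainTo_eq {A B : Finset ℕ} (h : A ⊆ B) {i : ℕ} (hi : (B \ A).card ≤ i) :
    chainTo A B i = B := by
  have hA := Finset.card_le_card h
  have hcard : B.card ≤ (chainTo A B i).card := by
    rw [chainTo_card, min_eq_right hi, Finset.card_sdiff_of_subset h]
    omega
  exact Finset.eq_of_subset_of_card_le (chainTo_subset h i) hcard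

lemma mem_wedgeFamily {n l : ℕ} {C : Finset ℕ} :
    C ∈ wedgeFamily n l ↔ C = ∅ ∨ (∃ i, i ∈ Finset.Icc 1 n ∧ C = {i}) ∨
      C ⊆ Finset.Icc 1 l ∨ (C ⊆ Finset.Icc 1 n ∧ Finset.Icc (l + 1) n ⊂ C) := by
  simp only [wedgeFamily, Finset.mem_insert, Finset.mem_union, Finset.mem_image,
    Finset.mem_powerset, Finset.mem_filter]
  constructor
  · rintro (h | (⟨i, hi, rfl⟩ | h) | h)
    exacts [Or.inl h, Or.inr (Or.inl ⟨i, hi, rfl⟩), Or.inr (Or.inr (Or.inl h)),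
      Or.inr (Or.inr (Or.inr h))]
  · rintro (h | ⟨i, hi, rfl⟩ | h | h)
    exacts [Or.inl h, Or.inr (Or.inl (Or.inl ⟨i, hi, rfl⟩)), Or.inr (Or.inl (Or.inr h)),
      Or.inr (Or.inr h)]

lemma mem_wedgePoset {l : ℕ} {A : Finset ℕ} :
    A ∈ wedgePoset l ↔ A = {1} ∨ A = {2} ∨ ∃ j < l, A = Finset.Icc 1 (j + 3) := by
  simp only [wedgePoset, Finset.mem_insert, Finset.mem_image, Finset.mem_range]
  constructor
  · rintro (h | h | ⟨j, hj, rfl⟩)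
    · exact Or.inl h
    · exact Or.inr (Or.inl h)
    · exact Or.inr (Or.inr ⟨j, hj, rfl⟩)
  · rintro (h | h | ⟨j, hj, rfl⟩)
    · exact Or.inl h
    · exact Or.inr (Or.inl h)
    · exact Or.inr (Or.inr ⟨j, hj, rfl⟩)

lemma chain_subset_of_le {g : ℕ → Finset ℕ} {l : ℕ} (h : ∀ j < l, g j ⊆ g (j + 1)) :
    ∀ k, k ≤ l → ∀ j, j ≤ k → g j ⊆ g k := by
  intro k
  induction k with
  | zero => intro _ j hj; rw [Nat.le_zero.mp hj]
  | succ m ih =>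
    intro hkl j hj
    rcases Nat.lt_or_ge j (m + 1) with hlt | hge
    · exact (ih (by omega) j (by omega)).trans (h m (by omega))
    · have hje : j = m + 1 := by omega
      rw [hje]

lemma chain_card_lt {g : ℕ → Finset ℕ} {l : ℕ} (h : ∀ j < l, (g j).card < (g (j + 1)).card) :
    ∀ k, k ≤ l → ∀ j, j < k → (g j).card < (g k).card := by
  intro k
  induction k with
  | zero => intro _ j hj; omega
  | succ m ih =>
    intro hkl j hj
    rcases Nat.lt_or_ge j m with hlt | hge
    · exact (ih (by omega) j (by omega)).trans (h m (by omega))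
    · have hje : j = m := by omega
      rw [hje]; exact h m (by omega)


lemma nat_chain_le {r : ℕ → ℕ} {l : ℕ} (h : ∀ j < l, r j < r (j + 1)) :
    ∀ k, k ≤ l → r 0 + k ≤ r k := by
  intro k
  induction k with
  | zero => intro _; omega
  | succ m ih =>
    intro hkl
    have := h m (by omega)
    have := ih (by omega)
    omega

lemma wedgeFamily_card (n l : ℕ) (hl : 2 ≤ l) (hn : l + 2 ≤ n) :
    (wedgeFamily n l).card = n + 2 ^ (l + 1) - l - 1 := by
  have hIcard : (Finset.Icc (l + 1) n).card = n - l := by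
    rw [Nat.card_Icc]; omega
  have hLcard : (Finset.Icc 1 l).card = l := by
    rw [Nat.card_Icc]; omega
  have hLn : l + 1 ∈ Finset.Icc (l + 1) n := by
    rw [Finset.mem_Icc]; omega
  have hsub : Finset.Icc 1 l ⊆ Finset.Icc 1 n := Finset.Icc_subset_Icc le_rfl (by omega)
  have heq : wedgeFamily n l =
      (Finset.Icc 1 l).powerset ∪ ((Finset.Icc (l + 1) n).image fun i => ({i} : Finset ℕ)) ∪
      (((Finset.Icc 1 l).powerset.erase ∅).image fun S => S ∪ Finset.Icc (l + 1) n) := by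
    ext C
    rw [mem_wedgeFamily]
    simp only [Finset.mem_union, Finset.mem_powerset, Finset.mem_image, Finset.mem_erase]
    constructor
    · rintro (rfl | ⟨i, hi, rfl⟩ | h | ⟨hC, hC2⟩)
      · exact Or.inl (Or.inl (Finset.empty_subset _))
      · rw [Finset.mem_Icc] at hi
        rcases le_or_gt i l with h | h
        · exact Or.inl (Or.inl (by rw [Finset.singleton_subset_iff, Finset.mem_Icc]; omega))
        · exact Or.inl (Or.inr ⟨i, by rw [Finset.mem_Icc]; omega, rfl⟩)
      · exact Or.inl (Or.inl h)
      · refine Or.inr ⟨C \ Finset.Icc (l + 1) n, ⟨?_, ?_⟩, ?_⟩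
        · intro hdiff
          obtain ⟨x, hxC, hxI⟩ := Finset.exists_of_ssubset hC2
          exact absurd (Finset.mem_sdiff.mpr ⟨hxC, hxI⟩) (by rw [hdiff]; simp)
        · intro x hx
          rw [Finset.mem_sdiff, Finset.mem_Icc] at hx
          have := hC hx.1
          rw [Finset.mem_Icc] at this ⊢
          omega
        · apply Finset.Subset.antisymm
          · exact Finset.union_subset (Finset.sdiff_subset) hC2.subset
          · intro x hx
            rw [Finset.mem_union, Finset.mem_sdiff]
            by_cases hxI : x ∈ Finset.Icc (l + 1) n
            · exact Or.inr hxI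
            · exact Or.inl ⟨hx, hxI⟩
    · rintro ((h | ⟨i, hi, rfl⟩) | ⟨S, ⟨hSne, hSl⟩, rfl⟩)
      · exact Or.inr (Or.inr (Or.inl h))
      · rw [Finset.mem_Icc] at hi
        exact Or.inr (Or.inl ⟨i, by rw [Finset.mem_Icc]; omega, rfl⟩)
      · refine Or.inr (Or.inr (Or.inr ⟨Finset.union_subset (hSl.trans hsub) (Finset.Icc_subset_Icc (by omega) le_rfl), ?_⟩))
        constructor
        · exact Finset.subset_union_right
        · intro hcon
          obtain ⟨a, ha⟩ := Finset.nonempty_iff_ne_empty.mpr hSne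
          have haI := hcon (Finset.mem_union_left _ ha)
          have := hSl ha
          rw [Finset.mem_Icc] at haI this
          omega
  rw [heq]
  have hd1 : Disjoint ((Finset.Icc 1 l).powerset)
      ((Finset.Icc (l + 1) n).image fun i => ({i} : Finset ℕ)) := by
    rw [Finset.disjoint_right]
    rintro C hC hC'
    simp only [Finset.mem_image] at hC
    obtain ⟨i, hi, rfl⟩ := hC
    rw [Finset.mem_powerset, Finset.singleton_subset_iff, Finset.mem_Icc] at hC'
    rw [Finset.mem_Icc] at hi
    omega
  have hd2 : Disjoint ((Finset.Icc 1 l).powerset ∪ ((Finset.Icc (l + 1) n).image fun i => ({i} : Finset ℕ)))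
      (((Finset.Icc 1 l).powerset.erase ∅).image fun S => S ∪ Finset.Icc (l + 1) n) := by
    rw [Finset.disjoint_right]
    rintro C hC hC'
    simp only [Finset.mem_image, Finset.mem_erase, Finset.mem_powerset] at hC
    obtain ⟨S, ⟨hSne, hSl⟩, rfl⟩ := hC
    have hmem : l + 1 ∈ S ∪ Finset.Icc (l + 1) n := Finset.mem_union_right _ hLn
    rcases Finset.mem_union.mp hC' with h | h
    · rw [Finset.mem_powerset] at h
      have := h hmem
      rw [Finset.mem_Icc] at this
      omega
    · simp only [Finset.mem_image] at h
      obtain ⟨i, hi, hieq⟩ := h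
      have hc1 : ({i} : Finset ℕ).card = 1 := Finset.card_singleton i
      rw [hieq] at hc1
      have : (Finset.Icc (l + 1) n).card ≤ (S ∪ Finset.Icc (l + 1) n).card :=
        Finset.card_le_card Finset.subset_union_right
      omega
  rw [Finset.card_union_of_disjoint hd2, Finset.card_union_of_disjoint hd1]
  have hc1 : ((Finset.Icc 1 l).powerset).card = 2 ^ l := by
    rw [Finset.card_powerset, hLcard]
  have hc2 : (((Finset.Icc (l + 1) n)).image fun i => ({i} : Finset ℕ)).card = n - l := by
    rw [Finset.card_image_of_injective _ Finset.singleton_injective, hIcard]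
  have hc3 : ((((Finset.Icc 1 l).powerset.erase ∅)).image fun S => S ∪ Finset.Icc (l + 1) n).card
      = 2 ^ l - 1 := by
    rw [Finset.card_image_of_injOn, Finset.card_erase_of_mem (Finset.empty_mem_powerset _), hc1]
    intro S hS T hT hST
    simp only [Finset.mem_coe, Finset.mem_erase, Finset.mem_powerset] at hS hT
    have key : ∀ U : Finset ℕ, U ⊆ Finset.Icc 1 l →
        (U ∪ Finset.Icc (l + 1) n) \ Finset.Icc (l + 1) n = U := by
      intro U hU
      rw [Finset.union_sdiff_right]
      apply Finset.sdiff_eq_self_of_disjoint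
      rw [Finset.disjoint_left]
      intro x hx hx'
      have := hU hx
      rw [Finset.mem_Icc] at this hx'
      omega
    have hST' : S ∪ Finset.Icc (l + 1) n = T ∪ Finset.Icc (l + 1) n := hST
    rw [← key S hS.2, ← key T hT.2, hST']
  rw [hc1, hc2, hc3]
  have hp : 1 ≤ 2 ^ l := Nat.one_le_two_pow
  have hp2 : 2 ^ (l + 1) = 2 ^ l + 2 ^ l := by rw [pow_succ]; omega
  omega

lemma wedgeFamily_not_contains (n l : ℕ) (hl : 2 ≤ l) (hn : l + 2 ≤ n) :
    ¬ ContainsInduced (wedgePoset (l + 1)) (wedgeFamily n l) := by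
  rintro ⟨φ, hinj, hmem, hiff⟩
  have h1 : ({1} : Finset ℕ) ∈ wedgePoset (l + 1) := mem_wedgePoset.mpr (Or.inl rfl)
  have h2 : ({2} : Finset ℕ) ∈ wedgePoset (l + 1) := mem_wedgePoset.mpr (Or.inr (Or.inl rfl))
  have hj : ∀ j, j ≤ l → Finset.Icc 1 (j + 3) ∈ wedgePoset (l + 1) := fun j hjl =>
    mem_wedgePoset.mpr (Or.inr (Or.inr ⟨j, by omega, rfl⟩))
  set A := φ {1} with hA
  set B := φ {2} with hB
  set C : ℕ → Finset ℕ := fun j => φ (Finset.Icc 1 (j + 3)) with hC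
  -- legs incomparable
  have hnAB : ¬ A ⊆ B := by
    rw [hiff _ h1 _ h2]
    intro hcon
    have := hcon (Finset.mem_singleton_self 1)
    simp at this
  have hnBA : ¬ B ⊆ A := by
    rw [hiff _ h2 _ h1]
    intro hcon
    have := hcon (Finset.mem_singleton_self 2)
    simp at this
  obtain ⟨u, huA, huB⟩ := Finset.not_subset.mp hnAB
  obtain ⟨v, hvB, hvA⟩ := Finset.not_subset.mp hnBA
  have huv : u ≠ v := fun h => hvA (h ▸ huA)
  -- legs below chain bottom
  have hAC0 : A ⊆ C 0 := (hiff _ h1 _ (hj 0 (by omega))).mpr (by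
    rw [Finset.singleton_subset_iff, Finset.mem_Icc]; omega)
  have hBC0 : B ⊆ C 0 := (hiff _ h2 _ (hj 0 (by omega))).mpr (by
    rw [Finset.singleton_subset_iff, Finset.mem_Icc]; omega)
  -- chain
  have hCmono : ∀ j < l, C j ⊆ C (j + 1) := fun j hjl =>
    (hiff _ (hj j (by omega)) _ (hj (j + 1) (by omega))).mpr
      (Finset.Icc_subset_Icc le_rfl (by omega))
  have hCne : ∀ j < l, C j ≠ C (j + 1) := by
    intro j hjl hcon
    have := hinj (Finset.mem_coe.mpr (hj j (by omega))) (Finset.mem_coe.mpr (hj (j + 1) (by omega))) hcon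
    have h4 : j + 4 ∈ Finset.Icc 1 (j + 4) := by rw [Finset.mem_Icc]; omega
    rw [← this] at h4
    rw [Finset.mem_Icc] at h4
    omega
  have hsub := chain_subset_of_le hCmono
  have huvC : ∀ j, j ≤ l → u ∈ C j ∧ v ∈ C j := fun j hjl =>
    ⟨hsub j hjl 0 (Nat.zero_le _) (hAC0 huA), hsub j hjl 0 (Nat.zero_le _) (hBC0 hvB)⟩
  -- case analysis on each chain element
  have hcase : ∀ j, j ≤ l →
      (C j ⊆ Finset.Icc 1 l ∧ ¬ Finset.Icc (l + 1) n ⊂ C j) ∨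
      (C j ⊆ Finset.Icc 1 n ∧ Finset.Icc (l + 1) n ⊂ C j) := by
    intro j hjl
    obtain ⟨hu', hv'⟩ := huvC j hjl
    rcases mem_wedgeFamily.mp (hmem _ (hj j hjl)) with h | ⟨i, hi, h⟩ | h | h
    · rw [show C j = ∅ from h] at hu'; exact absurd hu' (Finset.notMem_empty u)
    · rw [show C j = {i} from h, Finset.mem_singleton] at hu' hv'
      exact absurd (hu'.trans hv'.symm) huv
    · refine Or.inl ⟨h, fun hcon => ?_⟩
      have hmeml : l + 1 ∈ Finset.Icc (l + 1) n := by rw [Finset.mem_Icc]; omega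
      have := h (hcon.subset hmeml)
      rw [Finset.mem_Icc] at this
      omega
    · exact Or.inr h
  -- decomposition of filter sets
  have hdecomp : ∀ X : Finset ℕ, X ⊆ Finset.Icc 1 n → Finset.Icc (l + 1) n ⊆ X →
      X = (X ∩ Finset.Icc 1 l) ∪ Finset.Icc (l + 1) n := by
    intro X hXn hIX
    ext x
    simp only [Finset.mem_union, Finset.mem_inter, Finset.mem_Icc]
    constructor
    · intro hx
      have := hXn hx
      rw [Finset.mem_Icc] at this
      rcases le_or_gt x l with h' | h'
      · exact Or.inl ⟨hx, by omega⟩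
      · exact Or.inr (by omega)
    · rintro (⟨hx, _⟩ | hx)
      · exact hx
      · exact hIX (by rw [Finset.mem_Icc]; omega)
  set r : ℕ → ℕ := fun j =>
    (C j ∩ Finset.Icc 1 l).card + (if Finset.Icc (l + 1) n ⊂ C j then 1 else 0) with hr
  have hstep : ∀ j < l, r j < r (j + 1) := by
    intro j hjl
    have hCC := hCmono j hjl
    have hne := hCne j hjl
    have hinter : C j ∩ Finset.Icc 1 l ⊆ C (j + 1) ∩ Finset.Icc 1 l :=
      Finset.inter_subset_inter hCC (Finset.Subset.refl _)
    by_cases hfj : Finset.Icc (l + 1) n ⊂ C j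
    · have hfj1 : Finset.Icc (l + 1) n ⊂ C (j + 1) := hfj.trans_subset hCC
      have hXn : C j ⊆ Finset.Icc 1 n := by
        rcases hcase j (by omega) with h | h
        · exact absurd hfj h.2
        · exact h.1
      have hXn1 : C (j + 1) ⊆ Finset.Icc 1 n := by
        rcases hcase (j + 1) (by omega) with h | h
        · exact absurd hfj1 h.2
        · exact h.1
      have hlt : (C j ∩ Finset.Icc 1 l).card < (C (j + 1) ∩ Finset.Icc 1 l).card := by
        apply Finset.card_lt_card
        refine ⟨hinter, fun hcon => hne ?_⟩
        have e1 := hdecomp (C j) hXn hfj.subset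
        have e2 := hdecomp (C (j + 1)) hXn1 hfj1.subset
        rw [e1, e2]
        rw [Finset.Subset.antisymm hinter hcon]
      simp only [hr, if_pos hfj, if_pos hfj1]
      omega
    · have hjL : C j ⊆ Finset.Icc 1 l := by
        rcases hcase j (by omega) with h | h
        · exact h.1
        · exact absurd h.2 hfj
      have hCjeq : C j ∩ Finset.Icc 1 l = C j := Finset.inter_eq_left.mpr hjL
      by_cases hfj1 : Finset.Icc (l + 1) n ⊂ C (j + 1)
      · have : (C j).card ≤ (C (j + 1) ∩ Finset.Icc 1 l).card := by
          apply Finset.card_le_card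
          intro x hx
          exact Finset.mem_inter.mpr ⟨hCC hx, hjL hx⟩
        simp only [hr, if_pos hfj1, if_neg hfj]
        rw [hCjeq]
        omega
      · have hj1L : C (j + 1) ⊆ Finset.Icc 1 l := by
          rcases hcase (j + 1) (by omega) with h | h
          · exact h.1
          · exact absurd h.2 hfj1
        have hCj1eq : C (j + 1) ∩ Finset.Icc 1 l = C (j + 1) := Finset.inter_eq_left.mpr hj1L
        have : (C j).card < (C (j + 1)).card := Finset.card_lt_card ⟨hCC, fun h => hne (Finset.Subset.antisymm hCC h)⟩
        simp only [hr, if_neg hfj, if_neg hfj1]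
        rw [hCjeq, hCj1eq]
        omega
  have hfinal := nat_chain_le hstep l le_rfl
  have hr0 : 2 ≤ r 0 := by
    obtain ⟨hu0, hv0⟩ := huvC 0 (by omega)
    rcases hcase 0 (by omega) with h | h
    · have : ({u, v} : Finset ℕ) ⊆ C 0 ∩ Finset.Icc 1 l := by
        intro x hx
        rcases Finset.mem_insert.mp hx with rfl | hx
        · exact Finset.mem_inter.mpr ⟨hu0, h.1 hu0⟩
        · rw [Finset.mem_singleton] at hx
          subst hx
          exact Finset.mem_inter.mpr ⟨hv0, h.1 hv0⟩
      have hcard2 := Finset.card_le_card this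
      rw [Finset.card_pair huv] at hcard2
      simp only [hr, if_neg h.2]
      omega
    · obtain ⟨x, hxC, hxI⟩ := Finset.exists_of_ssubset h.2
      have hxn := h.1 hxC
      rw [Finset.mem_Icc] at hxI hxn
      have hx1 : x ∈ C 0 ∩ Finset.Icc 1 l :=
        Finset.mem_inter.mpr ⟨hxC, by rw [Finset.mem_Icc]; omega⟩
      have : 1 ≤ (C 0 ∩ Finset.Icc 1 l).card := Finset.card_pos.mpr ⟨x, hx1⟩
      simp only [hr, if_pos h.2]
      omega
  have hrl : r l ≤ l + 1 := by
    have h1' : (C l ∩ Finset.Icc 1 l).card ≤ l := by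
      have hsubr : C l ∩ Finset.Icc 1 l ⊆ Finset.Icc 1 l := Finset.inter_subset_right
      have := Finset.card_le_card hsubr
      rw [Nat.card_Icc] at this
      omega
    simp only [hr]
    split <;> omega
  omega

lemma wedgeFamily_saturating (n l : ℕ) (hl : 2 ≤ l) (hn : l + 2 ≤ n)
    (S : Finset ℕ) (hSn : S ⊆ Finset.Icc 1 n) (hSF : S ∉ wedgeFamily n l) :
    ContainsInduced (wedgePoset (l + 1)) (insert S (wedgeFamily n l)) := by
  rw [mem_wedgeFamily] at hSF
  push_neg at hSF
  obtain ⟨hSne, hSsing, hSL, hSI⟩ := hSF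
  have hSI' := hSI hSn
  -- basic facts
  have hS'L : S ∩ Finset.Icc 1 l ⊆ Finset.Icc 1 l := Finset.inter_subset_right
  have hS'S : S ∩ Finset.Icc 1 l ⊆ S := Finset.inter_subset_left
  obtain ⟨x, hxS, hxL⟩ := Finset.not_subset.mp hSL
  have hxN := hSn hxS
  rw [Finset.mem_Icc] at hxN
  rw [Finset.mem_Icc] at hxL
  have hxI : l + 1 ≤ x ∧ x ≤ n := by omega
  have hS2 : 2 ≤ S.card := by
    rcases Nat.lt_or_ge S.card 2 with h | h
    · interval_cases h' : S.card
      · exact absurd (Finset.card_eq_zero.mp h') hSne.ne_empty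
      · obtain ⟨i, rfl⟩ := Finset.card_eq_one.mp h'
        exact absurd rfl (hSsing i (hSn (Finset.mem_singleton_self i)))
    · exact h
  set s := (S ∩ Finset.Icc 1 l).card with hs
  -- the element of S' when s ≥ 1
  have hS'wit : 1 ≤ s → ∃ a, a ∈ S ∧ 1 ≤ a ∧ a ≤ l := by
    intro h1
    obtain ⟨a, ha⟩ := Finset.card_pos.mp (by omega : 0 < (S ∩ Finset.Icc 1 l).card)
    rw [Finset.mem_inter, Finset.mem_Icc] at ha
    exact ⟨a, ha.1, ha.2⟩
  -- I not contained in S when s ≥ 1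
  have hInotS : 1 ≤ s → ¬ Finset.Icc (l + 1) n ⊆ S := by
    intro h1 hcon
    obtain ⟨a, haS, ha⟩ := hS'wit h1
    apply hSI'
    refine ⟨hcon, fun hcon2 => ?_⟩
    have := hcon2 haS
    rw [Finset.mem_Icc] at this
    omega
  -- choose legs
  obtain ⟨p, hpS, q, hqS, hpq, hpqS'⟩ :
      ∃ p, p ∈ S ∧ ∃ q, q ∈ S ∧ p ≠ q ∧
        (2 ≤ s → p ∈ S ∩ Finset.Icc 1 l ∧ q ∈ S ∩ Finset.Icc 1 l) := by
    rcases Nat.lt_or_ge s 2 with hs2 | hs2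
    · obtain ⟨p, hp, q, hq, hpq⟩ := Finset.one_lt_card.mp (by omega : 1 < S.card)
      exact ⟨p, hp, q, hq, hpq, fun h => absurd h (by omega)⟩
    · obtain ⟨p, hp, q, hq, hpq⟩ := Finset.one_lt_card.mp (by omega : 1 < s)
      exact ⟨p, hS'S hp, q, hS'S hq, hpq, fun _ => ⟨hp, hq⟩⟩
  have hpN := hSn hpS
  have hqN := hSn hqS
  -- cardinalities
  have hS'card_lt : s < S.card := by
    apply Finset.card_lt_card
    refine ⟨hS'S, fun hcon => ?_⟩
    have := hcon hxS
    rw [Finset.mem_inter, Finset.mem_Icc] at this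
    omega
  have hNdiff : Finset.Icc 1 n \ (S ∪ Finset.Icc (l + 1) n)
      = Finset.Icc 1 l \ (S ∩ Finset.Icc 1 l) := by
    ext y
    simp only [Finset.mem_sdiff, Finset.mem_union, Finset.mem_Icc, Finset.mem_inter]
    constructor
    · rintro ⟨⟨h1, h2⟩, h3⟩
      push_neg at h3
      have hyS : y ∉ S := h3.1
      have := h3.2
      exact ⟨⟨h1, by omega⟩, fun hc => hyS hc.1⟩
    · rintro ⟨⟨h1, h2⟩, h3⟩
      refine ⟨⟨h1, by omega⟩, ?_⟩
      rintro (hc | hc)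
      · exact h3 ⟨hc, h1, h2⟩
      · omega
  have hd : (Finset.Icc 1 n \ (S ∪ Finset.Icc (l + 1) n)).card = l - s := by
    rw [hNdiff, Finset.card_sdiff_of_subset hS'L, Nat.card_Icc]
    omega
  have hSUIN : S ∪ Finset.Icc (l + 1) n ⊆ Finset.Icc 1 n :=
    Finset.union_subset hSn (Finset.Icc_subset_Icc (by omega) le_rfl)
  have hsub_card : S.card ≤ (S ∪ Finset.Icc (l + 1) n).card :=
    Finset.card_le_card Finset.subset_union_left
  -- the chain
  set g : ℕ → Finset ℕ := fun j =>
    if j + 2 ≤ s then chainTo {p, q} (S ∩ Finset.Icc 1 l) j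
    else if j ≤ s - 1 then S
    else chainTo (S ∪ Finset.Icc (l + 1) n) (Finset.Icc 1 n) (j - s) with hg
  have hdiffcard : 2 ≤ s → ((S ∩ Finset.Icc 1 l) \ {p, q}).card = s - 2 := by
    intro h2
    rw [Finset.card_sdiff_of_subset (by
      intro y hy
      rcases Finset.mem_insert.mp hy with rfl | hy
      · exact (hpqS' h2).1
      · rw [Finset.mem_singleton] at hy; exact hy ▸ (hpqS' h2).2), Finset.card_pair hpq]
  -- branch card formulas
  have hcard1 : ∀ j, j + 2 ≤ s → (g j).card = j + 2 := by
    intro j hj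
    rw [hg]
    simp only [if_pos hj]
    rw [chainTo_card, Finset.card_pair hpq, hdiffcard (by omega), min_eq_left (by omega)]
    omega
  have hcard3 : ∀ j, ¬ (j + 2 ≤ s) → ¬ (j ≤ s - 1) → j ≤ l →
      (g j).card = (S ∪ Finset.Icc (l + 1) n).card + (j - s) := by
    intro j h1 h2 hjl
    rw [hg]
    simp only [if_neg h1, if_neg h2]
    rw [chainTo_card, hd, min_eq_left (by omega)]
  have hcard2 : ∀ j, ¬ (j + 2 ≤ s) → j ≤ s - 1 → (g j).card = S.card := by
    intro j h1 h2
    rw [hg]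
    simp only [if_neg h1, if_pos h2]
  -- G2: monotone
  have hGmono : ∀ j, j < l → g j ⊆ g (j + 1) := by
    intro j hjl
    by_cases hb1 : j + 2 ≤ s
    · by_cases hb1' : j + 3 ≤ s
      · rw [hg]; simp only [if_pos hb1, if_pos (by omega : j + 1 + 2 ≤ s)]
        exact chainTo_mono _ _ (by omega)
      · have : j + 1 ≤ s - 1 := by omega
        rw [hg]; simp only [if_pos hb1, if_neg (by omega : ¬ (j + 1 + 2 ≤ s)), if_pos this]
        exact (chainTo_subset (by
          intro y hy
          rcases Finset.mem_insert.mp hy with rfl | hy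
          · exact (hpqS' (by omega)).1
          · rw [Finset.mem_singleton] at hy; exact hy ▸ (hpqS' (by omega)).2) j).trans hS'S
    · by_cases hb2 : j ≤ s - 1
      · rw [hg]
        simp only [if_neg hb1, if_pos hb2, if_neg (by omega : ¬ (j + 1 + 2 ≤ s)),
          if_neg (by omega : ¬ (j + 1 ≤ s - 1))]
        exact Finset.subset_union_left.trans (subset_chainTo _ _ _)
      · rw [hg]
        simp only [if_neg hb1, if_neg hb2, if_neg (by omega : ¬ (j + 1 + 2 ≤ s)),
          if_neg (by omega : ¬ (j + 1 ≤ s - 1))]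
        exact chainTo_mono _ _ (by omega)
  -- G3: strictly increasing cards
  have hGcard : ∀ j, j < l → (g j).card < (g (j + 1)).card := by
    intro j hjl
    by_cases hb1 : j + 2 ≤ s
    · by_cases hb1' : j + 3 ≤ s
      · rw [hcard1 j hb1, hcard1 (j + 1) (by omega)]; omega
      · rw [hcard1 j hb1, hcard2 (j + 1) (by omega) (by omega)]
        omega
    · by_cases hb2 : j ≤ s - 1
      · rw [hcard2 j hb1 hb2, hcard3 (j + 1) (by omega) (by omega) (by omega)]
        rcases Nat.lt_or_ge s 1 with hs1 | hs1
        · -- s = 0 : j = 0, j + 1 - s = j + 1 ≥ 1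
          omega
        · -- s ≥ 1 : S ⊊ S ∪ I
          have : S.card < (S ∪ Finset.Icc (l + 1) n).card := by
            apply Finset.card_lt_card
            refine ⟨Finset.subset_union_left, fun hcon => ?_⟩
            exact hInotS hs1 (Finset.subset_union_right.trans hcon)
          omega
      · rw [hcard3 j hb1 hb2 (by omega), hcard3 (j + 1) (by omega) (by omega) (by omega)]
        omega
  -- G4: membership
  have hGmem : ∀ j, j ≤ l → g j ∈ insert S (wedgeFamily n l) := by
    intro j hjl
    by_cases hb1 : j + 2 ≤ s
    · apply Finset.mem_insert_of_mem
      rw [mem_wedgeFamily]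
      refine Or.inr (Or.inr (Or.inl ?_))
      rw [hg]; simp only [if_pos hb1]
      exact (chainTo_subset (by
        intro y hy
        rcases Finset.mem_insert.mp hy with rfl | hy
        · exact (hpqS' (by omega)).1
        · rw [Finset.mem_singleton] at hy; exact hy ▸ (hpqS' (by omega)).2) j).trans hS'L
    · by_cases hb2 : j ≤ s - 1
      · rw [hg]; simp only [if_neg hb1, if_pos hb2]
        exact Finset.mem_insert_self _ _
      · apply Finset.mem_insert_of_mem
        rw [mem_wedgeFamily]
        refine Or.inr (Or.inr (Or.inr ⟨?_, ?_, ?_⟩))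
        · rw [hg]; simp only [if_neg hb1, if_neg hb2]
          exact chainTo_subset hSUIN _
        · -- I ⊆ g j
          rw [hg]; simp only [if_neg hb1, if_neg hb2]
          exact Finset.subset_union_right.trans (subset_chainTo _ _ _)
        · -- g j ≠ I, i.e. ¬ g j ⊆ I
          intro hcon
          rcases Nat.lt_or_ge s 1 with hs1 | hs1
          · have hc := hcard3 j hb1 hb2 hjl
            have hIc : (Finset.Icc (l + 1) n).card ≤ (S ∪ Finset.Icc (l + 1) n).card :=
              Finset.card_le_card Finset.subset_union_right
            have := Finset.card_le_card hcon
            omega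
          · obtain ⟨a, haS, ha1, hal⟩ := hS'wit hs1
            have hag : a ∈ g j := by
              rw [hg]; simp only [if_neg hb1, if_neg hb2]
              exact subset_chainTo _ _ _ (Finset.mem_union_left _ haS)
            have := hcon hag
            rw [Finset.mem_Icc] at this
            omega
  -- G1 and G5
  have hG1 : p ∈ g 0 ∧ q ∈ g 0 := by
    by_cases hb1 : 0 + 2 ≤ s
    · rw [hg]; simp only [if_pos hb1]
      rw [chainTo_zero]
      exact ⟨Finset.mem_insert_self _ _, Finset.mem_insert_of_mem (Finset.mem_singleton_self _)⟩
    · rw [hg]; simp only [if_pos hb1, if_neg hb1, if_pos (by omega : 0 ≤ s - 1)]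
      exact ⟨hpS, hqS⟩
  have hG5 : 2 ≤ (g 0).card := by
    by_cases hb1 : 0 + 2 ≤ s
    · rw [hcard1 0 hb1]
    · rw [hcard2 0 hb1 (by omega)]
      exact hS2
  have hgsub := chain_subset_of_le hGmono
  have hgclt := chain_card_lt hGcard
  have hg2 : ∀ j, j ≤ l → 2 ≤ (g j).card := by
    intro j hjl
    rcases Nat.eq_zero_or_pos j with rfl | hj
    · exact hG5
    · have := hgclt j hjl 0 (by omega)
      omega
  -- the copy map
  set φ : Finset ℕ → Finset ℕ := fun A =>
    if A = {1} then {p} else if A = {2} then {q} else g (A.card - 3) with hφ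
  have hφ1 : φ {1} = {p} := if_pos rfl
  have hφ2 : φ {2} = {q} := by
    simp [hφ]
  have hIcccard : ∀ j : ℕ, (Finset.Icc 1 (j + 3)).card = j + 3 := by
    intro j; rw [Nat.card_Icc]; omega
  have hIccne1 : ∀ j : ℕ, Finset.Icc 1 (j + 3) ≠ {1} := by
    intro j hcon
    have := hIcccard j
    rw [hcon, Finset.card_singleton] at this
    omega
  have hIccne2 : ∀ j : ℕ, Finset.Icc 1 (j + 3) ≠ {2} := by
    intro j hcon
    have := hIcccard j
    rw [hcon, Finset.card_singleton] at this
    omega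
  have hφI : ∀ j : ℕ, φ (Finset.Icc 1 (j + 3)) = g j := by
    intro j
    simp only [hφ]
    rw [if_neg (hIccne1 j), if_neg (hIccne2 j), hIcccard j]
    norm_num
  refine ⟨φ, ?_, ?_, ?_⟩
  · -- InjOn
    intro A hA B hB heq
    rw [Finset.mem_coe, mem_wedgePoset] at hA hB
    rcases hA with rfl | rfl | ⟨j, hj, rfl⟩ <;> rcases hB with rfl | rfl | ⟨k, hk, rfl⟩
    · rfl
    · rw [hφ1, hφ2] at heq
      exact absurd (Finset.singleton_injective heq) hpq
    · rw [hφ1, hφI k] at heq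
      have := hg2 k (by omega)
      rw [← heq, Finset.card_singleton] at this
      omega
    · rw [hφ1, hφ2] at heq
      exact absurd (Finset.singleton_injective heq).symm hpq
    · rfl
    · rw [hφ2, hφI k] at heq
      have := hg2 k (by omega)
      rw [← heq, Finset.card_singleton] at this
      omega
    · rw [hφ1, hφI j] at heq
      have := hg2 j (by omega)
      rw [heq, Finset.card_singleton] at this
      omega
    · rw [hφ2, hφI j] at heq
      have := hg2 j (by omega)
      rw [heq, Finset.card_singleton] at this
      omega
    · rw [hφI j, hφI k] at heq
      have hjk : j = k := by
        rcases lt_trichotomy j k with h | h | h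
        · have := hgclt k (by omega) j h
          rw [heq] at this
          omega
        · exact h
        · have := hgclt j (by omega) k h
          rw [heq] at this
          omega
      rw [hjk]
  · -- membership
    intro A hA
    rw [mem_wedgePoset] at hA
    rcases hA with rfl | rfl | ⟨j, hj, rfl⟩
    · rw [hφ1]
      exact Finset.mem_insert_of_mem (mem_wedgeFamily.mpr (Or.inr (Or.inl ⟨p, hpN, rfl⟩)))
    · rw [hφ2]
      exact Finset.mem_insert_of_mem (mem_wedgeFamily.mpr (Or.inr (Or.inl ⟨q, hqN, rfl⟩)))
    · rw [hφI j]
      exact hGmem j (by omega)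
  · -- order iff
    intro A hA B hB
    rw [mem_wedgePoset] at hA hB
    have hmem2 : ∀ j : ℕ, 2 ∈ Finset.Icc 1 (j + 3) := by
      intro j; rw [Finset.mem_Icc]; omega
    have hmem1 : ∀ j : ℕ, 1 ∈ Finset.Icc 1 (j + 3) := by
      intro j; rw [Finset.mem_Icc]; omega
    rcases hA with rfl | rfl | ⟨j, hj, rfl⟩ <;> rcases hB with rfl | rfl | ⟨k, hk, rfl⟩
    · exact iff_of_true (Finset.Subset.refl _) (Finset.Subset.refl _)
    · rw [hφ1, hφ2]
      refine iff_of_false ?_ ?_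
      · rw [Finset.singleton_subset_iff, Finset.mem_singleton]
        exact hpq
      · rw [Finset.singleton_subset_iff, Finset.mem_singleton]
        decide
    · rw [hφ1, hφI k]
      refine iff_of_true ?_ ?_
      · rw [Finset.singleton_subset_iff]
        exact hgsub k (by omega) 0 (by omega) hG1.1
      · rw [Finset.singleton_subset_iff]
        exact hmem1 k
    · rw [hφ1, hφ2]
      refine iff_of_false ?_ ?_
      · rw [Finset.singleton_subset_iff, Finset.mem_singleton]
        exact fun h => hpq h.symm
      · rw [Finset.singleton_subset_iff, Finset.mem_singleton]
        decide
    · exact iff_of_true (Finset.Subset.refl _) (Finset.Subset.refl _)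
    · rw [hφ2, hφI k]
      refine iff_of_true ?_ ?_
      · rw [Finset.singleton_subset_iff]
        exact hgsub k (by omega) 0 (by omega) hG1.2
      · rw [Finset.singleton_subset_iff]
        exact hmem2 k
    · rw [hφ1, hφI j]
      refine iff_of_false ?_ ?_
      · intro hcon
        have := Finset.card_le_card hcon
        rw [Finset.card_singleton] at this
        have := hg2 j (by omega)
        omega
      · intro hcon
        have := hcon (hmem2 j)
        rw [Finset.mem_singleton] at this
        omega
    · rw [hφ2, hφI j]
      refine iff_of_false ?_ ?_
      · intro hcon
        have := Finset.card_le_card hcon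
        rw [Finset.card_singleton] at this
        have := hg2 j (by omega)
        omega
      · intro hcon
        have := hcon (hmem1 j)
        rw [Finset.mem_singleton] at this
        omega
    · rw [hφI j, hφI k]
      constructor
      · intro hcon
        apply Finset.Icc_subset_Icc le_rfl
        by_contra hjk
        have := hgclt j (by omega) k (by omega)
        have := Finset.card_le_card hcon
        omega
      · intro hcon
        have hj3 : j + 3 ∈ Finset.Icc 1 (k + 3) := hcon (by rw [Finset.mem_Icc]; omega)
        rw [Finset.mem_Icc] at hj3
        exact hgsub k (by omega) j (by omega)

/-- For `n - 1 > ℓ ≥ 2`, the family above is induced `∧_{ℓ+1}`-saturated of size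
`n + 2^{ℓ+1} - ℓ - 1`; hence `sat*(n, ∧_{ℓ+1}) ≤ n + 2^{ℓ+1} - ℓ - 1`. -/
theorem wedge_saturated_upper_bound (n l : ℕ) (hl : 2 ≤ l) (hn : l < n - 1) :
    InducedSaturated n (wedgePoset (l + 1)) (wedgeFamily n l) ∧
    (wedgeFamily n l).card = n + 2 ^ (l + 1) - l - 1 ∧
    satStar n (wedgePoset (l + 1)) ≤ n + 2 ^ (l + 1) - l - 1 := by
  have hn2 : l + 2 ≤ n := by omega
  have hsubn : ∀ A ∈ wedgeFamily n l, A ⊆ Finset.Icc 1 n := by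
    intro A hA
    rcases mem_wedgeFamily.mp hA with rfl | ⟨i, hi, rfl⟩ | h | h
    · exact Finset.empty_subset _
    · rw [Finset.singleton_subset_iff]; exact hi
    · exact h.trans (Finset.Icc_subset_Icc le_rfl (by omega))
    · exact h.1
  have hsat : InducedSaturated n (wedgePoset (l + 1)) (wedgeFamily n l) :=
    ⟨hsubn, wedgeFamily_not_contains n l hl hn2,
      fun S hS hSF => wedgeFamily_saturating n l hl hn2 S hS hSF⟩
  have hcard := wedgeFamily_card n l hl hn2
  exact ⟨hsat, hcard, Nat.sInf_le ⟨wedgeFamily n l, hsat, hcard⟩⟩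
end

section
/- Let D be a digraph that contains an induced oriented cycle C, and suppose D contains no transitive cycle TC_k for any k ≥ 3. Then every vertex v ∈ V(D) \ V(C) has at most one in-edge from V(C) and at most one out-edge to V(C). -/
/-- Let `D` be a digraph (edge relation `E`) containing an induced oriented cycle
`c 0, c 1, …, c (m-1)` and no transitive cycle `TC_k` for any `k ≥ 3`. Then every
vertex outside the cycle has at most one in-edge from the cycle and at most one
out-edge to the cycle. -/
theorem induced_cycle_neighbours {V : Type*} (E : V → V → Prop)
    (hirr : ∀ v, ¬ E v v)
    (m : ℕ) (hm : 2 ≤ m) (c : ℕ → V) (hinj : Set.InjOn c (Set.Iio m))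
    (hcyc : ∀ i, i + 1 < m → E (c i) (c (i + 1))) (hclose : E (c (m - 1)) (c 0))
    (hind : ∀ i j, i < m → j < m → E (c i) (c j) →
      (j = i + 1 ∨ (i = m - 1 ∧ j = 0)))
    (hTC : ∀ k, 3 ≤ k → ¬ ∃ φ : ℕ → V, Set.InjOn φ (Set.Iio k) ∧
      (∀ i, i + 1 < k → E (φ i) (φ (i + 1))) ∧ E (φ 0) (φ (k - 1))) :
    ∀ v : V, (∀ i, i < m → v ≠ c i) →
      (∀ i j, i < m → j < m → E (c i) v → E (c j) v → i = j) ∧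
      (∀ i j, i < m → j < m → E v (c i) → E v (c j) → i = j) := by
  intro v hv
  have hm0 : 0 < m := by omega
  -- stepping along the cycle, indices mod m
  have step : ∀ a : ℕ, E (c (a % m)) (c ((a + 1) % m)) := by
    intro a
    have h1 : a % m < m := Nat.mod_lt _ hm0
    have h2 : (a + 1) % m = (a % m + 1) % m := by
      conv_lhs => rw [Nat.add_mod]
      rw [Nat.mod_eq_of_lt (show 1 < m by omega)]
    rcases lt_or_ge (a % m + 1) m with h | h
    · rw [h2, Nat.mod_eq_of_lt h]
      exact hcyc _ (by omega)
    · have ha : a % m = m - 1 := by omega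
      rw [h2, ha, show m - 1 + 1 = m from by omega, Nat.mod_self]
      exact hclose
  have cancel : ∀ a b x : ℕ, a < m → b < m → (x + a) % m = (x + b) % m → a = b := by
    intro a b x ha hb h
    have h2 : a ≡ b [MOD m] := Nat.ModEq.add_left_cancel' x h
    have h3 : a % m = b % m := h2
    rwa [Nat.mod_eq_of_lt ha, Nat.mod_eq_of_lt hb] at h3
  constructor
  · -- in-edges
    intro i j hi hj hiv hjv
    by_contra hne
    obtain ⟨d, hdm, hji, hd0⟩ : ∃ d, d < m ∧ (j + d) % m = i ∧ d ≠ 0 := by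
      have hdm : (i + m - j) % m < m := Nat.mod_lt _ hm0
      have hji : (j + (i + m - j) % m) % m = i := by
        rw [Nat.add_mod_mod, show j + (i + m - j) = i + m from by omega,
          Nat.add_mod_right, Nat.mod_eq_of_lt hi]
      refine ⟨_, hdm, hji, fun h0 => ?_⟩
      rw [h0, Nat.add_zero, Nat.mod_eq_of_lt hj] at hji
      exact hne hji.symm
    refine hTC (d + 2) (by omega)
      ⟨fun t => if t = d + 1 then v else c ((j + t) % m), ?_, ?_, ?_⟩
    · intro a ha b hb hab
      simp only [Set.mem_Iio] at ha hb
      beta_reduce at hab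
      rcases eq_or_ne a (d + 1) with h1 | h1 <;> rcases eq_or_ne b (d + 1) with h2 | h2
      · rw [h1, h2]
      · rw [if_pos h1, if_neg h2] at hab
        exact absurd hab (hv _ (Nat.mod_lt _ hm0))
      · rw [if_neg h1, if_pos h2] at hab
        exact absurd hab.symm (hv _ (Nat.mod_lt _ hm0))
      · rw [if_neg h1, if_neg h2] at hab
        have h3 := hinj (Set.mem_Iio.mpr (Nat.mod_lt (j + a) hm0))
          (Set.mem_Iio.mpr (Nat.mod_lt (j + b) hm0)) hab
        exact cancel a b j (by omega) (by omega) h3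
    · intro t ht
      beta_reduce
      rcases eq_or_ne t d with h | h
      · subst h
        rw [if_neg (by omega), if_pos rfl, hji]
        exact hiv
      · rw [if_neg (by omega), if_neg (by omega)]
        exact step (j + t)
    · beta_reduce
      rw [if_neg (by omega), if_pos (by omega), Nat.add_zero, Nat.mod_eq_of_lt hj]
      exact hjv
  · -- out-edges
    intro i j hi hj hiv hjv
    by_contra hne
    obtain ⟨d, hdm, hij, hd0⟩ : ∃ d, d < m ∧ (i + d) % m = j ∧ d ≠ 0 := by
      have hdm : (j + m - i) % m < m := Nat.mod_lt _ hm0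
      have hij : (i + (j + m - i) % m) % m = j := by
        rw [Nat.add_mod_mod, show i + (j + m - i) = j + m from by omega,
          Nat.add_mod_right, Nat.mod_eq_of_lt hj]
      refine ⟨_, hdm, hij, fun h0 => ?_⟩
      rw [h0, Nat.add_zero, Nat.mod_eq_of_lt hi] at hij
      exact hne hij
    refine hTC (d + 2) (by omega)
      ⟨fun t => if t = 0 then v else c ((i + (t - 1)) % m), ?_, ?_, ?_⟩
    · intro a ha b hb hab
      simp only [Set.mem_Iio] at ha hb
      beta_reduce at hab
      rcases eq_or_ne a 0 with h1 | h1 <;> rcases eq_or_ne b 0 with h2 | h2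
      · rw [h1, h2]
      · rw [if_pos h1, if_neg h2] at hab
        exact absurd hab (hv _ (Nat.mod_lt _ hm0))
      · rw [if_neg h1, if_pos h2] at hab
        exact absurd hab.symm (hv _ (Nat.mod_lt _ hm0))
      · rw [if_neg h1, if_neg h2] at hab
        have h3 := hinj (Set.mem_Iio.mpr (Nat.mod_lt (i + (a - 1)) hm0))
          (Set.mem_Iio.mpr (Nat.mod_lt (i + (b - 1)) hm0)) hab
        have := cancel (a - 1) (b - 1) i (by omega) (by omega) h3
        omega
    · intro t ht
      beta_reduce
      rcases eq_or_ne t 0 with h | h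
      · subst h
        rw [if_pos rfl, if_neg (by omega), show 1 - 1 = 0 from rfl, Nat.add_zero,
          Nat.mod_eq_of_lt hi]
        exact hiv
      · rw [if_neg h, if_neg (by omega)]
        have h' := step (i + (t - 1))
        rwa [show i + (t - 1) + 1 = i + (t + 1 - 1) from by omega] at h'
    · beta_reduce
      rw [if_pos rfl, if_neg (by omega),
        show d + 2 - 1 - 1 = d from by omega, hij]
      exact hjv
end
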